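/- arXiv:1203.0696 — 9 statements merged into one kernel-verified Lean document; each statement's English description precedes it below -/
import Mathlib

section
/- Fix ε ∈ (0, 1/2] with ε ≥ ε_c = 1 − √2/2. Then the rate region Λ_s(ε) equals the set of all pairs (r₁, r₂) with r₁ ≥ 0 and r₂ ≥ 0 satisfying the three inequalities: r₁ + (1−ε)(3−2ε)·r₂ ≤ (1−ε)(3−2ε)/2; r₁ + r₂ ≤ 3/4 − ε/2; (1−ε)(3−2ε)·r₁ + r₂ ≤ (1−ε)(3−2ε)/2. -/
open Finset

/-- State of the symmetric Gilbert–Elliot two-queue model: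
`(m, c₁, c₂)` where `m = true` means the server is at queue 1,
and `cᵢ = true` means channel `i` is ON. -/
abbrev GEState : Type := Bool × Bool × Bool

/-- One-step symmetric channel transition with flip probability `ε`:
the channel keeps its value with probability `1 - ε` and flips it with probability `ε`. -/
noncomputable def chFlip (ε : ℝ) (c c' : Bool) : ℝ := if c = c' then 1 - ε else ε

/-- Transition probability of going to state `s'` from state `s` under action `a`
(`a = true` means "stay", `a = false` means "switch"). -/
noncomputable def GEP (ε : ℝ) (s' s : GEState) (a : Bool) : ℝ :=
  (if s'.1 = (if a then s.1 else !s.1) then (1 : ℝ) else 0) *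
    chFlip ε s.2.1 s'.2.1 * chFlip ε s.2.2 s'.2.2

/-- The state-action polytope `X(ε)`: nonnegative, normalized vectors satisfying the
balance equations. -/
def GEX (ε : ℝ) : Set (GEState × Bool → ℝ) :=
  {x | (∀ sa, 0 ≤ x sa) ∧ (∑ sa : GEState × Bool, x sa) = 1 ∧
    ∀ s : GEState, (∑ a : Bool, x (s, a)) =
      ∑ s' : GEState, ∑ a : Bool, GEP ε s s' a * x (s', a)}

/-- Rate of queue 1: frequency of staying at queue 1 with channel 1 ON. -/
noncomputable def GErate1 (x : GEState × Bool → ℝ) : ℝ :=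
  x ((true, true, true), true) + x ((true, true, false), true)

/-- Rate of queue 2: frequency of staying at queue 2 with channel 2 ON. -/
noncomputable def GErate2 (x : GEState × Bool → ℝ) : ℝ :=
  x ((false, true, true), true) + x ((false, false, true), true)

/-- The rate region `Λ_s(ε)`. -/
def GERateRegion (ε : ℝ) : Set (ℝ × ℝ) :=
  {r | ∃ x ∈ GEX ε, r = (GErate1 x, GErate2 x)}


noncomputable def GEvec (v0 v1 v2 v3 v4 v5 v6 v7 v8 v9 v10 v11 v12 v13 v14 v15 : ℝ) :
    GEState × Bool → ℝ := fun sa =>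
  cond sa.2
    (cond sa.1.1 (cond sa.1.2.1 (cond sa.1.2.2 v0 v1) (cond sa.1.2.2 v2 v3))
      (cond sa.1.2.1 (cond sa.1.2.2 v4 v5) (cond sa.1.2.2 v6 v7)))
    (cond sa.1.1 (cond sa.1.2.1 (cond sa.1.2.2 v8 v9) (cond sa.1.2.2 v10 v11))
      (cond sa.1.2.1 (cond sa.1.2.2 v12 v13) (cond sa.1.2.2 v14 v15)))

set_option maxHeartbeats 4000000 in
/-- For `ε ∈ (0, 1/2]` with `ε ≥ ε_c = 1 - √2/2`, the rate region `Λ_s(ε)` is the set of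
nonnegative pairs `(r₁, r₂)` satisfying the three stated inequalities. -/
theorem rate_region_eq_of_ge_critical (ε : ℝ) (hε : ε ∈ Set.Ioc (0 : ℝ) (1 / 2))
    (hc : 1 - Real.sqrt 2 / 2 ≤ ε) :
    GERateRegion ε =
      {r : ℝ × ℝ | 0 ≤ r.1 ∧ 0 ≤ r.2 ∧
        r.1 + (1 - ε) * (3 - 2 * ε) * r.2 ≤ (1 - ε) * (3 - 2 * ε) / 2 ∧
        r.1 + r.2 ≤ 3 / 4 - ε / 2 ∧
        (1 - ε) * (3 - 2 * ε) * r.1 + r.2 ≤ (1 - ε) * (3 - 2 * ε) / 2} := by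
  obtain ⟨hε0, hε2⟩ := hε
  have h1e : (0:ℝ) < 1 - ε := by linarith
  have h3e : (0:ℝ) < 3 - 2*ε := by linarith
  have h2e : (0:ℝ) < 2 - ε := by linarith
  have h12 : (0:ℝ) ≤ 1 - 2*ε := by linarith
  apply Set.Subset.antisymm
  · -- region ⊆ polytope description
    rintro ⟨r1, r2⟩ ⟨x, ⟨hpos, hsum, hbal⟩, heq⟩
    rw [Prod.mk.injEq] at heq
    obtain ⟨hr1, hr2⟩ := heq
    subst hr1; subst hr2
    simp only [Set.mem_setOf_eq]
    -- coefficient positivity facts (proved in a small context)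
    have hsq : 2*(1-ε)^2 ≤ 1 := by
      have ha : 1 - ε ≤ Real.sqrt 2 / 2 := by linarith
      nlinarith [Real.sq_sqrt (by norm_num : (0:ℝ) ≤ 2), Real.sqrt_nonneg 2]
    have h45 : (0:ℝ) ≤ 4 - 5*ε + 2*ε^2 := by nlinarith [sq_nonneg (1-ε)]
    have h266 : (0:ℝ) ≤ 2*ε^2 - 6*ε + 6 := by nlinarith [sq_nonneg (1-ε)]
    have qa : (0:ℝ) ≤ -1 + 4*ε - 2*ε^2 := by linarith [hsq]
    have qc : (0:ℝ) ≤ 4*ε - 13*ε^2 + 12*ε^3 - 4*ε^4 := by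
      nlinarith [mul_nonneg (mul_nonneg hε0.le h12) h45]
    have qd : (0:ℝ) ≤ 3*ε^2 - 8*ε^3 + 4*ε^4 := by
      nlinarith [mul_nonneg (mul_nonneg (mul_nonneg hε0.le hε0.le) h12) h3e.le]
    have qe : (0:ℝ) ≤ 1 - 3*ε^2 + 2*ε^3 := by
      nlinarith [mul_nonneg (mul_nonneg h1e.le h1e.le) (by linarith : (0:ℝ) ≤ 1 + 2*ε)]
    have qf : (0:ℝ) ≤ 7*ε - 18*ε^2 + 14*ε^3 - 4*ε^4 := by
      nlinarith [mul_nonneg (mul_nonneg hε0.le h12) h266, hε0.le]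
    have q21 : (0:ℝ) ≤ 8*ε - 8*ε^2 := by nlinarith [mul_pos hε0 h1e]
    have q22 : (0:ℝ) ≤ 16*ε - 32*ε^2 + 16*ε^3 := by
      nlinarith [mul_nonneg hε0.le (mul_nonneg h1e.le h1e.le)]
    have q23 : (0:ℝ) ≤ 8*ε - 24*ε^2 + 16*ε^3 := by
      nlinarith [mul_nonneg (mul_nonneg hε0.le h1e.le) h12]
    have hb0 := hbal (true, true, true)
    have hb1 := hbal (true, true, false)
    have hb2 := hbal (true, false, true)
    have hb3 := hbal (true, false, false)
    have hb4 := hbal (false, true, true)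
    have hb5 := hbal (false, true, false)
    have hb6 := hbal (false, false, true)
    have hb7 := hbal (false, false, false)
    simp only [Fintype.sum_prod_type, Fintype.sum_bool] at hsum
    simp [Fintype.sum_prod_type, Fintype.sum_bool, GEP, chFlip] at hb0 hb1 hb2 hb3 hb4 hb5 hb6 hb7
    refine ⟨add_nonneg (hpos _) (hpos _), add_nonneg (hpos _) (hpos _), ?_, ?_, ?_⟩
    · -- r1 + β r2 ≤ β/2
      have key : ε * ((1 - ε) * (3 - 2 * ε) / 2 -
          (GErate1 x + (1 - ε) * (3 - 2 * ε) * GErate2 x)) =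
          (-1 + 4*ε - 2*ε^2) * x ((true,true,true),false)
          + ε * x ((true,true,false),false)
          + (4*ε - 13*ε^2 + 12*ε^3 - 4*ε^4) * x ((true,false,true),true)
          + (3*ε^2 - 8*ε^3 + 4*ε^4) * x ((true,false,false),true)
          + (1 - 3*ε^2 + 2*ε^3) * x ((false,true,true),false)
          + (7*ε - 18*ε^2 + 14*ε^3 - 4*ε^4) * x ((false,false,true),false)
          + (3*ε^2 - 8*ε^3 + 4*ε^4) * x ((false,false,false),false) := by
        simp only [GErate1, GErate2]
        linear_combination (-(1/2) + 3/2*ε - 4*ε^2 + 2*ε^3) * hb0 + (-ε) * hb1 +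
          (-(3/2) + 11/2*ε - 6*ε^2 + 2*ε^3) * hb2 +
          (-(3/2) + 5/2*ε - ε^2) * hb4 + (-(3/2) + 5/2*ε - ε^2) * hb6 +
          (-(3/2)*ε + 5/2*ε^2 - ε^3) * hsum
      have hge : (0:ℝ) ≤ ε * ((1 - ε) * (3 - 2 * ε) / 2 -
          (GErate1 x + (1 - ε) * (3 - 2 * ε) * GErate2 x)) := by
        rw [key]
        have u1 := mul_nonneg qa (hpos ((true,true,true),false))
        have u2 := mul_nonneg hε0.le (hpos ((true,true,false),false))
        have u3 := mul_nonneg qc (hpos ((true,false,true),true))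
        have u4 := mul_nonneg qd (hpos ((true,false,false),true))
        have u5 := mul_nonneg qe (hpos ((false,true,true),false))
        have u6 := mul_nonneg qf (hpos ((false,false,true),false))
        have u7 := mul_nonneg qd (hpos ((false,false,false),false))
        linarith [u1,u2,u3,u4,u5,u6,u7]
      have hfin := le_of_mul_le_mul_left (by linarith [hge] : ε * 0 ≤ ε * ((1 - ε) * (3 - 2 * ε) / 2 - (GErate1 x + (1 - ε) * (3 - 2 * ε) * GErate2 x))) hε0
      linarith [hfin]
    · -- r1 + r2 ≤ 3/4 - ε/2
      have key : (8*(ε*(1-ε))) * ((3/4 - ε/2) - (GErate1 x + GErate2 x)) =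
          (8*ε - 8*ε^2) * x ((true,true,true),false)
          + (16*ε - 32*ε^2 + 16*ε^3) * x ((true,true,false),false)
          + (8*ε - 24*ε^2 + 16*ε^3) * x ((true,false,true),true)
          + (8*ε - 8*ε^2) * x ((false,true,true),false)
          + (8*ε - 24*ε^2 + 16*ε^3) * x ((false,true,false),true)
          + (16*ε - 32*ε^2 + 16*ε^3) * x ((false,false,true),false) := by
        simp only [GErate1, GErate2]
        linear_combination (-4 + 4*ε) * hb0 + (-3 + 4*ε^2) * hb1 + (-3 + 8*ε - 4*ε^2) * hb2 +
          (-4 + 4*ε) * hb4 + (-3 + 8*ε - 4*ε^2) * hb5 + (-3 + 4*ε^2) * hb6 +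
          (-6*ε + 10*ε^2 - 4*ε^3) * hsum
      have hge : (0:ℝ) ≤ (8*(ε*(1-ε))) * ((3/4 - ε/2) - (GErate1 x + GErate2 x)) := by
        rw [key]
        have u1 := mul_nonneg q21 (hpos ((true,true,true),false))
        have u2 := mul_nonneg q22 (hpos ((true,true,false),false))
        have u3 := mul_nonneg q23 (hpos ((true,false,true),true))
        have u4 := mul_nonneg q21 (hpos ((false,true,true),false))
        have u5 := mul_nonneg q23 (hpos ((false,true,false),true))
        have u6 := mul_nonneg q22 (hpos ((false,false,true),false))
        linarith [u1,u2,u3,u4,u5,u6]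
      have hmul : (0:ℝ) < 8*(ε*(1-ε)) := by nlinarith [mul_pos hε0 h1e]
      have hfin := le_of_mul_le_mul_left (by linarith [hge] : (8*(ε*(1-ε))) * 0 ≤ (8*(ε*(1-ε))) * ((3/4 - ε/2) - (GErate1 x + GErate2 x))) hmul
      linarith [hfin]
    · -- β r1 + r2 ≤ β/2
      have key : ε * ((1 - ε) * (3 - 2 * ε) / 2 -
          ((1 - ε) * (3 - 2 * ε) * GErate1 x + GErate2 x)) =
          (1 - 3*ε^2 + 2*ε^3) * x ((true,true,true),false)
          + (7*ε - 18*ε^2 + 14*ε^3 - 4*ε^4) * x ((true,true,false),false)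
          + (3*ε^2 - 8*ε^3 + 4*ε^4) * x ((true,false,false),false)
          + (-1 + 4*ε - 2*ε^2) * x ((false,true,true),false)
          + (ε) * x ((false,false,true),false)
          + (4*ε - 13*ε^2 + 12*ε^3 - 4*ε^4) * x ((false,true,false),true)
          + (3*ε^2 - 8*ε^3 + 4*ε^4) * x ((false,false,false),true) := by
        simp only [GErate1, GErate2]
        linear_combination (-(3/2) + 5/2*ε - ε^2) * hb0 + (-(3/2) + 5/2*ε - ε^2) * hb1 +
          (-(1/2) + 3/2*ε - 4*ε^2 + 2*ε^3) * hb4 +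
          (-(3/2) + 11/2*ε - 6*ε^2 + 2*ε^3) * hb5 + (-ε) * hb6 +
          (-(3/2)*ε + 5/2*ε^2 - ε^3) * hsum
      have hge : (0:ℝ) ≤ ε * ((1 - ε) * (3 - 2 * ε) / 2 -
          ((1 - ε) * (3 - 2 * ε) * GErate1 x + GErate2 x)) := by
        rw [key]
        have u1 := mul_nonneg qe (hpos ((true,true,true),false))
        have u2 := mul_nonneg qf (hpos ((true,true,false),false))
        have u3 := mul_nonneg qd (hpos ((true,false,false),false))
        have u4 := mul_nonneg qa (hpos ((false,true,true),false))
        have u5 := mul_nonneg hε0.le (hpos ((false,false,true),false))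
        have u6 := mul_nonneg qc (hpos ((false,true,false),true))
        have u7 := mul_nonneg qd (hpos ((false,false,false),true))
        linarith [u1,u2,u3,u4,u5,u6,u7]
      have hfin := le_of_mul_le_mul_left (by linarith [hge] : ε * 0 ≤ ε * ((1 - ε) * (3 - 2 * ε) / 2 - ((1 - ε) * (3 - 2 * ε) * GErate1 x + GErate2 x))) hε0
      linarith [hfin]
  · -- polytope description ⊆ region
    rintro ⟨r1, r2⟩ ⟨h1, h2, h3, h4, h5⟩
    dsimp only at h1 h2 h3 h4 h5
    rcases le_or_gt r2 ((1-ε)*r1) with hcase | hA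
    · -- r2 ≤ (1-ε) r1 : mix always-switch, stay-at-1, and the (A,B)-vertex policy
      have hD : (0:ℝ) < 8*(1-ε)*(3-2*ε) := by positivity
      have k1 : 0 ≤ (1-ε)*r1 - r2 := by linarith
      have k0 : 0 ≤ (1-ε)*(3-2*ε) - 2*(1-ε)*(3-2*ε)*r1 - 2*r2 := by linarith
      have p1 : 0 ≤ (3-2*ε)*((1-ε)*r1-r2) := mul_nonneg h3e.le k1
      have p2 : 0 ≤ (1-ε)*r2 := mul_nonneg h1e.le h2
      have p3 : 0 ≤ (2-3*ε+2*ε^2)*r2 := mul_nonneg (by nlinarith [sq_nonneg (1-ε)]) h2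
      have p4 : 0 ≤ (1-ε)*((1-ε)*r2) := mul_nonneg h1e.le p2
      have p5 : 0 ≤ ε*r2 := mul_nonneg hε0.le h2
      have p6 : 0 ≤ ε*((3-2*ε)*r2) := mul_nonneg hε0.le (mul_nonneg h3e.le h2)
      have p7 : 0 ≤ ε*((1-ε)*r2) := mul_nonneg hε0.le p2
      refine ⟨GEvec ((4*(3-2*ε)*((1-ε)*r1-r2)+8*r2)/(8*(1-ε)*(3-2*ε))) ((4*(3-2*ε)*((1-ε)*r1-r2)+16*(1-ε)*r2)/(8*(1-ε)*(3-2*ε))) ((4*(3-2*ε)*((1-ε)*r1-r2))/(8*(1-ε)*(3-2*ε))) ((4*(3-2*ε)*((1-ε)*r1-r2)+8*(2-3*ε+2*ε^2)*r2)/(8*(1-ε)*(3-2*ε))) ((8*(1-ε)*r2)/(8*(1-ε)*(3-2*ε))) ((0:ℝ)/(8*(1-ε)*(3-2*ε))) ((16*(1-ε)*(1-ε)*r2)/(8*(1-ε)*(3-2*ε))) ((0:ℝ)/(8*(1-ε)*(3-2*ε))) (((1-ε)*(3-2*ε)-2*(1-ε)*(3-2*ε)*r1-2*r2)/(8*(1-ε)*(3-2*ε)))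 (((1-ε)*(3-2*ε)-2*(1-ε)*(3-2*ε)*r1-2*r2)/(8*(1-ε)*(3-2*ε))) ((((1-ε)*(3-2*ε)-2*(1-ε)*(3-2*ε)*r1-2*r2)+8*ε*(3-2*ε)*r2)/(8*(1-ε)*(3-2*ε))) (((1-ε)*(3-2*ε)-2*(1-ε)*(3-2*ε)*r1-2*r2)/(8*(1-ε)*(3-2*ε))) (((1-ε)*(3-2*ε)-2*(1-ε)*(3-2*ε)*r1-2*r2)/(8*(1-ε)*(3-2*ε))) ((((1-ε)*(3-2*ε)-2*(1-ε)*(3-2*ε)*r1-2*r2)+8*ε*r2)/(8*(1-ε)*(3-2*ε))) (((1-ε)*(3-2*ε)-2*(1-ε)*(3-2*ε)*r1-2*r2)/(8*(1-ε)*(3-2*ε))) ((((1-ε)*(3-2*ε)-2*(1-ε)*(3-2*ε)*r1-2*r2)+16*ε*(1-ε)*r2)/(8*(1-ε)*(3-2*ε))), ⟨?_, ?_, ?_⟩, ?_⟩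
      · rintro ⟨⟨m, c1, c2⟩, a⟩
        cases m <;> cases c1 <;> cases c2 <;> cases a <;>
          simp only [GEvec, cond_true, cond_false] <;>
          apply div_nonneg _ hD.le <;>
          linarith [k0, k1, h2, p1, p2, p3, p4, p5, p6, p7]
      · simp only [Fintype.sum_prod_type, Fintype.sum_bool, GEvec, cond_true, cond_false]
        field_simp
        ring
      · rintro ⟨m, c1, c2⟩
        cases m <;> cases c1 <;> cases c2 <;>
          · simp [Fintype.sum_prod_type, Fintype.sum_bool, GEP, chFlip, GEvec]
            ring
      · rw [Prod.mk.injEq]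
        constructor
        · simp only [GErate1, GEvec, cond_true, cond_false]
          field_simp
          ring
        · simp only [GErate2, GEvec, cond_true, cond_false]
          field_simp
          ring_nf
          field_simp [show (3:ℝ) - ε*2 ≠ 0 by linarith]
          ring
    · rcases le_or_gt r1 ((1-ε)*r2) with hcase | hB
      · -- r1 ≤ (1-ε) r2 : mirror case
        have hD : (0:ℝ) < 8*(1-ε)*(3-2*ε) := by positivity
        have k1 : 0 ≤ (1-ε)*r2 - r1 := by linarith
        have k0 : 0 ≤ (1-ε)*(3-2*ε) - 2*r1 - 2*(1-ε)*(3-2*ε)*r2 := by linarith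
        have p1 : 0 ≤ (3-2*ε)*((1-ε)*r2-r1) := mul_nonneg h3e.le k1
        have p2 : 0 ≤ (1-ε)*r1 := mul_nonneg h1e.le h1
        have p3 : 0 ≤ (2-3*ε+2*ε^2)*r1 := mul_nonneg (by nlinarith [sq_nonneg (1-ε)]) h1
        have p4 : 0 ≤ (1-ε)*((1-ε)*r1) := mul_nonneg h1e.le p2
        have p5 : 0 ≤ ε*r1 := mul_nonneg hε0.le h1
        have p6 : 0 ≤ ε*((3-2*ε)*r1) := mul_nonneg hε0.le (mul_nonneg h3e.le h1)
        have p7 : 0 ≤ ε*((1-ε)*r1) := mul_nonneg hε0.le p2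
        refine ⟨GEvec ((8*(1-ε)*r1)/(8*(1-ε)*(3-2*ε))) ((16*(1-ε)*(1-ε)*r1)/(8*(1-ε)*(3-2*ε))) ((0:ℝ)/(8*(1-ε)*(3-2*ε))) ((0:ℝ)/(8*(1-ε)*(3-2*ε))) ((4*(3-2*ε)*((1-ε)*r2-r1)+8*r1)/(8*(1-ε)*(3-2*ε))) ((4*(3-2*ε)*((1-ε)*r2-r1))/(8*(1-ε)*(3-2*ε))) ((4*(3-2*ε)*((1-ε)*r2-r1)+16*(1-ε)*r1)/(8*(1-ε)*(3-2*ε))) ((4*(3-2*ε)*((1-ε)*r2-r1)+8*(2-3*ε+2*ε^2)*r1)/(8*(1-ε)*(3-2*ε))) (((1-ε)*(3-2*ε)-2*r1-2*(1-ε)*(3-2*ε)*r2)/(8*(1-ε)*(3-2*ε))) (((1-ε)*(3-2*ε)-2*r1-2*(1-ε)*(3-2*ε)*r2)/(8*(1-ε)*(3-2*ε))) ((((1-ε)*(3-2*ε)-2*r1-2*(1-ε)*(3-2*ε)*r2)+8*ε*r1)/(8*(1-ε)*(3-2*ε))) ((((1-ε)*(3-2*ε)-2*r1-2*(1-ε)*(3-2*ε)*r2)+16*ε*(1-ε)*r1)/(8*(1-ε)*(3-2*ε)))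 (((1-ε)*(3-2*ε)-2*r1-2*(1-ε)*(3-2*ε)*r2)/(8*(1-ε)*(3-2*ε))) ((((1-ε)*(3-2*ε)-2*r1-2*(1-ε)*(3-2*ε)*r2)+8*ε*(3-2*ε)*r1)/(8*(1-ε)*(3-2*ε))) (((1-ε)*(3-2*ε)-2*r1-2*(1-ε)*(3-2*ε)*r2)/(8*(1-ε)*(3-2*ε))) (((1-ε)*(3-2*ε)-2*r1-2*(1-ε)*(3-2*ε)*r2)/(8*(1-ε)*(3-2*ε))), ⟨?_, ?_, ?_⟩, ?_⟩
        · rintro ⟨⟨m, c1, c2⟩, a⟩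
          cases m <;> cases c1 <;> cases c2 <;> cases a <;>
            simp only [GEvec, cond_true, cond_false] <;>
            apply div_nonneg _ hD.le <;>
            linarith [k0, k1, h1, p1, p2, p3, p4, p5, p6, p7]
        · simp only [Fintype.sum_prod_type, Fintype.sum_bool, GEvec, cond_true, cond_false]
          field_simp
          ring_nf
          field_simp [show (3:ℝ) - ε*2 ≠ 0 by linarith]
          ring
        · rintro ⟨m, c1, c2⟩
          cases m <;> cases c1 <;> cases c2 <;>
            · simp [Fintype.sum_prod_type, Fintype.sum_bool, GEP, chFlip, GEvec]
              ring
        · rw [Prod.mk.injEq]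
          constructor
          · simp only [GErate1, GEvec, cond_true, cond_false]
            field_simp
            ring_nf
            field_simp [show (3:ℝ) - ε*2 ≠ 0 by linarith]
            ring
          · simp only [GErate2, GEvec, cond_true, cond_false]
            field_simp
            ring
      · -- middle case : mix always-switch with the two vertex policies
        have hD : (0:ℝ) < 8*ε*(2-ε)*(3-2*ε) := by positivity
        have k1 : 0 ≤ r1 - (1-ε)*r2 := by linarith
        have k2 : 0 ≤ r2 - (1-ε)*r1 := by linarith
        have k0 : 0 ≤ 3 - 2*ε - 4*r1 - 4*r2 := by linarith
        have p0 : 0 ≤ ε*((2-ε)*(3 - 2*ε - 4*r1 - 4*r2)) :=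
          mul_nonneg hε0.le (mul_nonneg h2e.le k0)
        have p1 : 0 ≤ (1-ε)*(r1-(1-ε)*r2) := mul_nonneg h1e.le k1
        have p2 : 0 ≤ (1-ε)*((1-ε)*(r1-(1-ε)*r2)) := mul_nonneg h1e.le p1
        have p3 : 0 ≤ (2-3*ε+2*ε^2)*(r1-(1-ε)*r2) := mul_nonneg (by nlinarith [sq_nonneg (1-ε)]) k1
        have p4 : 0 ≤ ε*((3-2*ε)*(r1-(1-ε)*r2)) := mul_nonneg hε0.le (mul_nonneg h3e.le k1)
        have p5 : 0 ≤ ε*(r1-(1-ε)*r2) := mul_nonneg hε0.le k1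
        have p6 : 0 ≤ ε*((1-ε)*(r1-(1-ε)*r2)) := mul_nonneg hε0.le p1
        have q1 : 0 ≤ (1-ε)*(r2-(1-ε)*r1) := mul_nonneg h1e.le k2
        have q2 : 0 ≤ (1-ε)*((1-ε)*(r2-(1-ε)*r1)) := mul_nonneg h1e.le q1
        have q3 : 0 ≤ (2-3*ε+2*ε^2)*(r2-(1-ε)*r1) := mul_nonneg (by nlinarith [sq_nonneg (1-ε)]) k2
        have q4 : 0 ≤ ε*((3-2*ε)*(r2-(1-ε)*r1)) := mul_nonneg hε0.le (mul_nonneg h3e.le k2)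
        have q5 : 0 ≤ ε*(r2-(1-ε)*r1) := mul_nonneg hε0.le k2
        have q6 : 0 ≤ ε*((1-ε)*(r2-(1-ε)*r1)) := mul_nonneg hε0.le q1
        refine ⟨GEvec ((8*(r1-(1-ε)*r2)+8*(1-ε)*(r2-(1-ε)*r1))/(8*ε*(2-ε)*(3-2*ε))) ((16*(1-ε)*(r1-(1-ε)*r2)+16*(1-ε)*(1-ε)*(r2-(1-ε)*r1))/(8*ε*(2-ε)*(3-2*ε))) ((0:ℝ)/(8*ε*(2-ε)*(3-2*ε))) ((8*(2-3*ε+2*ε^2)*(r1-(1-ε)*r2))/(8*ε*(2-ε)*(3-2*ε))) ((8*(1-ε)*(r1-(1-ε)*r2)+8*(r2-(1-ε)*r1))/(8*ε*(2-ε)*(3-2*ε))) ((0:ℝ)/(8*ε*(2-ε)*(3-2*ε))) ((16*(1-ε)*(1-ε)*(r1-(1-ε)*r2)+16*(1-ε)*(r2-(1-ε)*r1))/(8*ε*(2-ε)*(3-2*ε))) ((8*(2-3*ε+2*ε^2)*(r2-(1-ε)*r1))/(8*ε*(2-ε)*(3-2*ε))) ((ε*(2-ε)*(3-2*ε-4*r1-4*r2))/(8*ε*(2-ε)*(3-2*ε)))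 ((ε*(2-ε)*(3-2*ε-4*r1-4*r2))/(8*ε*(2-ε)*(3-2*ε))) (((ε*(2-ε)*(3-2*ε-4*r1-4*r2))+8*ε*(3-2*ε)*(r1-(1-ε)*r2)+8*ε*(r2-(1-ε)*r1))/(8*ε*(2-ε)*(3-2*ε))) (((ε*(2-ε)*(3-2*ε-4*r1-4*r2))+16*ε*(1-ε)*(r2-(1-ε)*r1))/(8*ε*(2-ε)*(3-2*ε))) ((ε*(2-ε)*(3-2*ε-4*r1-4*r2))/(8*ε*(2-ε)*(3-2*ε))) (((ε*(2-ε)*(3-2*ε-4*r1-4*r2))+8*ε*(r1-(1-ε)*r2)+8*ε*(3-2*ε)*(r2-(1-ε)*r1))/(8*ε*(2-ε)*(3-2*ε))) ((ε*(2-ε)*(3-2*ε-4*r1-4*r2))/(8*ε*(2-ε)*(3-2*ε))) (((ε*(2-ε)*(3-2*ε-4*r1-4*r2))+16*ε*(1-ε)*(r1-(1-ε)*r2))/(8*ε*(2-ε)*(3-2*ε))), ⟨?_, ?_, ?_⟩, ?_⟩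
        · rintro ⟨⟨m, c1, c2⟩, a⟩
          cases m <;> cases c1 <;> cases c2 <;> cases a <;>
            simp only [GEvec, cond_true, cond_false] <;>
            apply div_nonneg _ hD.le <;>
            linarith [k0, k1, k2, p0, p1, p2, p3, p4, p5, p6, q1, q2, q3, q4, q5, q6]
        · simp only [Fintype.sum_prod_type, Fintype.sum_bool, GEvec, cond_true, cond_false]
          field_simp
          ring_nf
          field_simp [show (3:ℝ) - ε*2 ≠ 0 by linarith]
          ring
        · rintro ⟨m, c1, c2⟩
          cases m <;> cases c1 <;> cases c2 <;>
            · simp [Fintype.sum_prod_type, Fintype.sum_bool, GEP, chFlip, GEvec]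
              ring
        · rw [Prod.mk.injEq]
          constructor
          · simp only [GErate1, GEvec, cond_true, cond_false]
            field_simp
            ring_nf
            field_simp [show (3:ℝ) - ε*2 ≠ 0 by linarith]
            ring
          · simp only [GErate2, GEvec, cond_true, cond_false]
            field_simp
            ring_nf
            field_simp [show (3:ℝ) - ε*2 ≠ 0 by linarith]
            ring
end

section
/- For every ε ∈ (0, 1/2], the maximum of r₁(x) + r₂(x) over all x in the state-action polytope X(ε) equals 3/4 − ε/2; that is, every x ∈ X(ε) satisfies r₁(x) + r₂(x) ≤ 3/4 − ε/2, and there exists x ∈ X(ε) attaining equality. -/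
open Finset

/-- The stationary state-action frequency vector of the optimal policy
(stay exactly when the current channel is ON, or when both channels are OFF). -/
noncomputable def GEopt (ε : ℝ) : GEState × Bool → ℝ := fun sa =>
  match sa with
  | ((true, true, true), true) => 1 / 8
  | ((true, true, false), true) => (1 - ε) / 4
  | ((true, false, true), false) => ε / 4
  | ((true, false, false), true) => 1 / 8
  | ((false, true, true), true) => 1 / 8
  | ((false, false, true), true) => (1 - ε) / 4
  | ((false, true, false), false) => ε / 4
  | ((false, false, false), true) => 1 / 8
  | _ => 0

set_option maxHeartbeats 2000000 in
/-- For every `ε ∈ (0, 1/2]`, the maximum of `r₁(x) + r₂(x)` over the state-action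
polytope `X(ε)` equals `3/4 - ε/2`: every `x ∈ X(ε)` satisfies the bound, and some
`x ∈ X(ε)` attains it. -/
theorem max_sum_rate (ε : ℝ) (hε : ε ∈ Set.Ioc (0 : ℝ) (1 / 2)) :
    (∀ x ∈ GEX ε, GErate1 x + GErate2 x ≤ 3 / 4 - ε / 2) ∧
    (∃ x ∈ GEX ε, GErate1 x + GErate2 x = 3 / 4 - ε / 2) := by
  obtain ⟨hε0, hε1⟩ := hε
  constructor
  · rintro x ⟨hpos, hsum, hbal⟩
    have hTTT := hbal (true, true, true)
    have hTTF := hbal (true, true, false)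
    have hTFT := hbal (true, false, true)
    have hTFF := hbal (true, false, false)
    have hFTT := hbal (false, true, true)
    have hFTF := hbal (false, true, false)
    have hFFT := hbal (false, false, true)
    have hFFF := hbal (false, false, false)
    simp only [Fintype.sum_prod_type, Fintype.sum_bool, GEP, chFlip]
      at hsum hTTT hTTF hTFT hTFF hFTT hFTF hFFT hFFF
    norm_num at hTTT hTTF hTFT hTFF hFTT hFTF hFFT hFFF
    have key : 8 * ε * (1 - ε) * (3 / 4 - ε / 2 - (GErate1 x + GErate2 x)) =
        8 * ε * (1 - ε) * x ((true, true, true), false)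
        + 8 * ε * (1 - ε) * (2 - 2 * ε) * x ((true, true, false), false)
        + 8 * ε * (1 - ε) * (1 - 2 * ε) * x ((true, false, true), true)
        + 8 * ε * (1 - ε) * x ((false, true, true), false)
        + 8 * ε * (1 - ε) * (2 - 2 * ε) * x ((false, false, true), false)
        + 8 * ε * (1 - ε) * (1 - 2 * ε) * x ((false, true, false), true) := by
      unfold GErate1 GErate2
      linear_combination ((1 - 2*ε)^2) * hTTF + ((1 - 2*ε)^2 + 8*ε*(1 - ε)) * hTFT
        + (4*(1 - ε)) * hTFF + ((1 - 2*ε)^2 + 8*ε*(1 - ε)) * hFTF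
        + ((1 - 2*ε)^2) * hFFT + (4*(1 - ε)) * hFFF
        + (8*ε*(1 - ε)*(ε/2 - 3/4)) * hsum
    have hS : 0 < 8 * ε * (1 - ε) := by nlinarith
    have h2ε : 0 ≤ 1 - 2 * ε := by linarith
    have hrhs : 0 ≤ 8 * ε * (1 - ε) * (3 / 4 - ε / 2 - (GErate1 x + GErate2 x)) := by
      rw [key]
      have p1 := hpos ((true, true, true), false)
      have p2 := hpos ((true, true, false), false)
      have p3 := hpos ((true, false, true), true)
      have p4 := hpos ((false, true, true), false)
      have p5 := hpos ((false, false, true), false)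
      have p6 := hpos ((false, true, false), true)
      nlinarith [mul_nonneg hS.le p1, mul_nonneg hS.le p4,
        mul_nonneg (mul_nonneg hS.le (by linarith : (0:ℝ) ≤ 2 - 2*ε)) p2,
        mul_nonneg (mul_nonneg hS.le (by linarith : (0:ℝ) ≤ 2 - 2*ε)) p5,
        mul_nonneg (mul_nonneg hS.le h2ε) p3,
        mul_nonneg (mul_nonneg hS.le h2ε) p6]
    nlinarith [hrhs, hS]
  · refine ⟨GEopt ε, ⟨?_, ?_, ?_⟩, ?_⟩
    · rintro ⟨⟨m, c1, c2⟩, a⟩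
      cases m <;> cases c1 <;> cases c2 <;> cases a <;> simp [GEopt] <;> linarith
    · simp only [Fintype.sum_prod_type, Fintype.sum_bool, GEopt]
      norm_num
      ring
    · rintro ⟨m, c1, c2⟩
      cases m <;> cases c1 <;> cases c2 <;>
        · simp only [Fintype.sum_prod_type, Fintype.sum_bool, GEP, chFlip, GEopt]
          norm_num
          ring
    · simp only [GErate1, GErate2, GEopt]
      ring
end

section
/- For every ε ∈ (0, 1/2], there exists x in the state-action polytope X(ε) whose rate pair equals (r₁, r₂) = ( (1−ε)(3−2ε) / (4(2−ε)) , (3−2ε) / (4(2−ε)) ). (This is the rate pair of the stationary deterministic policy that stays at queue 1 exactly when C₁ = 1 and stays at queue 2 except in channel state (C₁,C₂) = (1,0).) -/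
open Finset

noncomputable def xcorner (ε : ℝ) : GEState × Bool → ℝ := fun sa =>
  ((if sa = ((true,true,true),true) then 1-ε else 0)
  + (if sa = ((true,true,false),true) then 2*(1-ε)^2 else 0)
  + (if sa = ((true,false,true),false) then ε else 0)
  + (if sa = ((true,false,false),false) then 2*ε*(1-ε) else 0)
  + (if sa = ((false,true,true),true) then 1 else 0)
  + (if sa = ((false,true,false),false) then ε*(3-2*ε) else 0)
  + (if sa = ((false,false,true),true) then 2-2*ε else 0)
  + (if sa = ((false,false,false),true) then 2*ε^2-3*ε+2 else 0)) / (4*(2-ε))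

set_option maxHeartbeats 2000000 in
/-- For every `ε ∈ (0, 1/2]`, some `x` in the state-action polytope `X(ε)` has rate pair
`((1-ε)(3-2ε)/(4(2-ε)), (3-2ε)/(4(2-ε)))`. -/
theorem exists_rate_pair_corner (ε : ℝ) (hε : ε ∈ Set.Ioc (0 : ℝ) (1 / 2)) :
    ∃ x ∈ GEX ε,
      GErate1 x = (1 - ε) * (3 - 2 * ε) / (4 * (2 - ε)) ∧
      GErate2 x = (3 - 2 * ε) / (4 * (2 - ε)) := by
  obtain ⟨hε0, hε2⟩ := hε
  have h2 : (2:ℝ) - ε ≠ 0 := by nlinarith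
  refine ⟨xcorner ε, ⟨?_, ?_, ?_⟩, ?_, ?_⟩
  · rintro ⟨⟨m, c1, c2⟩, a⟩
    cases m <;> cases c1 <;> cases c2 <;> cases a <;>
      simp [xcorner] <;>
      (first | nlinarith | positivity | (apply div_nonneg <;> nlinarith))
  · simp [Fintype.sum_prod_type, Fintype.sum_bool, xcorner]
    field_simp
    ring
  · rintro ⟨m, c1, c2⟩
    cases m <;> cases c1 <;> cases c2 <;>
      (simp [GEP, chFlip, xcorner, Fintype.sum_prod_type, Fintype.sum_bool]; field_simp; ring)
  · simp [GErate1, xcorner]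
    field_simp
    ring
  · simp [GErate2, xcorner]
    field_simp
    ring
end

section
/- Fix N ≥ 2 and p₀₁, p₁₀ ∈ (0,1) with p₀₁ + p₁₀ ≤ 1, and let C₀ = (p₁₀/(p₁₀+p₀₁))^N. Then every x in the state-action polytope X of the Gilbert–Elliot N-queue model satisfies the sum-rate upper bound Σ_{i=1}^N r_i(x) ≤ 1 − C₀ − ( p₁₀(1 − C₀) − p₀₁·C₀ ). -/
open Finset

/-- State of the Gilbert–Elliot `N`-queue model: the server location `m ∈ Fin N` and the
channel state vector `c : Fin N → Bool` (`true` = ON). -/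
abbrev NState (N : ℕ) : Type := Fin N × (Fin N → Bool)

/-- One-step Gilbert–Elliot channel transition: from ON the channel moves to OFF with
probability `p₁₀`, from OFF it moves to ON with probability `p₀₁`. -/
noncomputable def chTrans (p01 p10 : ℝ) (c c' : Bool) : ℝ :=
  if c then (if c' then 1 - p10 else p10) else (if c' then p01 else 1 - p01)

/-- Transition probability of going to state `s'` from state `s` under action `a`:
the next location is `a`, and the channels move independently. -/
noncomputable def NP (N : ℕ) (p01 p10 : ℝ) (s' s : NState N) (a : Fin N) : ℝ :=
  (if s'.1 = a then (1 : ℝ) else 0) * ∏ i : Fin N, chTrans p01 p10 (s.2 i) (s'.2 i)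

/-- The state-action polytope `X`: nonnegative, normalized vectors satisfying the
balance equations. -/
def NX (N : ℕ) (p01 p10 : ℝ) : Set (NState N × Fin N → ℝ) :=
  {x | (∀ sa, 0 ≤ x sa) ∧ (∑ sa : NState N × Fin N, x sa) = 1 ∧
    ∀ s : NState N, (∑ a : Fin N, x (s, a)) =
      ∑ s' : NState N, ∑ a : Fin N, NP N p01 p10 s s' a * x (s', a)}

/-- Rate of queue `i` under `x`: the frequency of staying at queue `i` while its
channel is ON. -/
noncomputable def Nrate (N : ℕ) (x : NState N × Fin N → ℝ) (i : Fin N) : ℝ :=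
  ∑ c : Fin N → Bool, if c i then x ((i, c), i) else 0

/-! ### Auxiliary material -/

/-- The second (right) eigenfunction of the two-state channel chain. -/
noncomputable def hfun (p01 p10 : ℝ) : Bool → ℝ := fun b => if b then 1 else -p01/p10

lemma chTrans_sum (p01 p10 : ℝ) (d : Bool) :
    chTrans p01 p10 d false + chTrans p01 p10 d true = 1 := by
  cases d <;> simp [chTrans] <;> ring

lemma chTrans_eigen (p01 p10 : ℝ) (hp10 : p10 ≠ 0) (d : Bool) :
    chTrans p01 p10 d false * hfun p01 p10 false + chTrans p01 p10 d true * hfun p01 p10 true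
      = (1 - p01 - p10) * hfun p01 p10 d := by
  cases d <;> simp [chTrans, hfun] <;> field_simp <;> ring

lemma inner_NP (N : ℕ) (p01 p10 : ℝ) (s' : NState N) (a : Fin N) (w : Fin N → Bool → ℝ) :
    ∑ s : NState N, NP N p01 p10 s s' a * ∏ i, w i (s.2 i)
      = ∏ i, (chTrans p01 p10 (s'.2 i) false * w i false
            + chTrans p01 p10 (s'.2 i) true * w i true) := by
  rw [Fintype.sum_prod_type]
  simp only [NP]
  rw [Finset.sum_eq_single a]
  · simp only [eq_self_iff_true, if_true, one_mul]
    have hmul : ∀ c : Fin N → Bool,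
        (∏ i : Fin N, chTrans p01 p10 (s'.2 i) (c i)) * ∏ i, w i (c i)
          = ∏ i : Fin N, (chTrans p01 p10 (s'.2 i) (c i) * w i (c i)) := by
      intro c; rw [Finset.prod_mul_distrib]
    simp only [hmul]
    have key := Finset.prod_univ_sum (fun _ : Fin N => (Finset.univ : Finset Bool))
      (fun i b => chTrans p01 p10 (s'.2 i) b * w i b)
    rw [Fintype.piFinset_univ] at key
    rw [← key]
    refine Finset.prod_congr rfl fun i _ => ?_
    rw [Fintype.sum_bool]; ring
  · intro b _ hb
    simp [if_neg hb]
  · simp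

/-- Rewriting the expectation of a functional under the stationary-like measure
via the balance equations. -/
lemma swapE (N : ℕ) (p01 p10 : ℝ) (x : NState N × Fin N → ℝ)
    (hbal : ∀ s : NState N, (∑ a : Fin N, x (s, a)) =
      ∑ s' : NState N, ∑ a : Fin N, NP N p01 p10 s s' a * x (s', a))
    (G : NState N → ℝ) :
    ∑ s : NState N, (∑ a : Fin N, x (s, a)) * G s
      = ∑ s' : NState N, ∑ a : Fin N, x (s', a) *
          ∑ s : NState N, NP N p01 p10 s s' a * G s := by
  calc ∑ s : NState N, (∑ a : Fin N, x (s, a)) * G s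
      = ∑ s : NState N, ∑ s' : NState N, ∑ a : Fin N,
          NP N p01 p10 s s' a * x (s', a) * G s := by
        refine Finset.sum_congr rfl fun s _ => ?_
        rw [hbal s, Finset.sum_mul]
        exact Finset.sum_congr rfl fun s' _ => Finset.sum_mul _ _ _
    _ = ∑ s' : NState N, ∑ s : NState N, ∑ a : Fin N,
          NP N p01 p10 s s' a * x (s', a) * G s := Finset.sum_comm
    _ = ∑ s' : NState N, ∑ a : Fin N, ∑ s : NState N,
          NP N p01 p10 s s' a * x (s', a) * G s := by
        exact Finset.sum_congr rfl fun s' _ => Finset.sum_comm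
    _ = ∑ s' : NState N, ∑ a : Fin N, x (s', a) *
          ∑ s : NState N, NP N p01 p10 s s' a * G s := by
        refine Finset.sum_congr rfl fun s' _ => Finset.sum_congr rfl fun a _ => ?_
        rw [Finset.mul_sum]
        exact Finset.sum_congr rfl fun s _ => by ring

/-- The mixed moments of the eigenfunction vanish in the stationary regime. -/
lemma moment_zero (N : ℕ) (p01 p10 : ℝ) (h01 : 0 < p01) (h10 : 0 < p10)
    (hsum : p01 + p10 ≤ 1) (x : NState N × Fin N → ℝ)
    (hbal : ∀ s : NState N, (∑ a : Fin N, x (s, a)) =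
      ∑ s' : NState N, ∑ a : Fin N, NP N p01 p10 s s' a * x (s', a))
    (S : Finset (Fin N)) (hS : S.Nonempty) :
    ∑ s : NState N, (∑ a : Fin N, x (s, a)) * ∏ i ∈ S, hfun p01 p10 (s.2 i) = 0 := by
  classical
  set L : ℝ := 1 - p01 - p10 with hL
  set m : ℝ := ∑ s : NState N, (∑ a : Fin N, x (s, a)) * ∏ i ∈ S, hfun p01 p10 (s.2 i)
    with hm
  have hGw : ∀ c : Fin N → Bool,
      (∏ i ∈ S, hfun p01 p10 (c i))
        = ∏ i : Fin N, (if i ∈ S then hfun p01 p10 (c i) else 1) := by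
    intro c
    rw [Finset.prod_ite_mem, Finset.univ_inter]
  have hfactor : ∀ d : Fin N → Bool,
      (∏ i : Fin N, (chTrans p01 p10 (d i) false * (if i ∈ S then hfun p01 p10 false else 1)
          + chTrans p01 p10 (d i) true * (if i ∈ S then hfun p01 p10 true else 1)))
        = L ^ S.card * ∏ i ∈ S, hfun p01 p10 (d i) := by
    intro d
    have step : ∀ i : Fin N,
        (chTrans p01 p10 (d i) false * (if i ∈ S then hfun p01 p10 false else 1)
          + chTrans p01 p10 (d i) true * (if i ∈ S then hfun p01 p10 true else 1))
        = if i ∈ S then L * hfun p01 p10 (d i) else 1 := by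
      intro i
      by_cases hi : i ∈ S
      · simp only [if_pos hi]
        exact chTrans_eigen p01 p10 (ne_of_gt h10) (d i)
      · simp only [if_neg hi, mul_one]
        exact chTrans_sum p01 p10 (d i)
    rw [Finset.prod_congr rfl fun i _ => step i]
    rw [Finset.prod_ite_mem, Finset.univ_inter, Finset.prod_mul_distrib,
      Finset.prod_const]
  have key : m = L ^ S.card * m := by
    conv_lhs => rw [hm]
    rw [swapE N p01 p10 x hbal]
    have inner : ∀ (s' : NState N) (a : Fin N),
        (∑ s : NState N, NP N p01 p10 s s' a * ∏ i ∈ S, hfun p01 p10 (s.2 i))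
          = L ^ S.card * ∏ i ∈ S, hfun p01 p10 (s'.2 i) := by
      intro s' a
      calc ∑ s : NState N, NP N p01 p10 s s' a * ∏ i ∈ S, hfun p01 p10 (s.2 i)
          = ∑ s : NState N, NP N p01 p10 s s' a *
              ∏ i : Fin N, (if i ∈ S then hfun p01 p10 (s.2 i) else 1) := by
            exact Finset.sum_congr rfl fun s _ => by rw [hGw s.2]
        _ = _ := by
            rw [inner_NP N p01 p10 s' a (fun i b => if i ∈ S then hfun p01 p10 b else 1)]
            exact hfactor s'.2
    calc ∑ s' : NState N, ∑ a : Fin N, x (s', a) *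
            ∑ s : NState N, NP N p01 p10 s s' a * ∏ i ∈ S, hfun p01 p10 (s.2 i)
        = ∑ s' : NState N, ∑ a : Fin N, x (s', a) *
            (L ^ S.card * ∏ i ∈ S, hfun p01 p10 (s'.2 i)) := by
          exact Finset.sum_congr rfl fun s' _ => Finset.sum_congr rfl fun a _ => by
            rw [inner s' a]
      _ = L ^ S.card * ∑ s' : NState N,
            (∑ a : Fin N, x (s', a)) * ∏ i ∈ S, hfun p01 p10 (s'.2 i) := by
          rw [Finset.mul_sum]
          refine Finset.sum_congr rfl fun s' _ => ?_
          rw [← Finset.sum_mul]; ring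
      _ = L ^ S.card * m := by rw [hm]
  have hL0 : 0 ≤ L := by simp only [hL]; linarith
  have hL1 : L < 1 := by simp only [hL]; linarith
  have hcard : S.card ≠ 0 := Finset.card_ne_zero_of_mem hS.choose_spec
  have hpow : L ^ S.card < 1 := pow_lt_one₀ hL0 hL1 hcard
  nlinarith [key]


/-- The stationary probability that all channels are OFF equals `C₀`. -/
lemma alloff_prob (N : ℕ) (p01 p10 : ℝ) (h01 : 0 < p01) (h10 : 0 < p10)
    (hsum : p01 + p10 ≤ 1) (x : NState N × Fin N → ℝ)
    (hmass : ∑ s : NState N, (∑ a : Fin N, x (s, a)) = 1)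
    (hbal : ∀ s : NState N, (∑ a : Fin N, x (s, a)) =
      ∑ s' : NState N, ∑ a : Fin N, NP N p01 p10 s s' a * x (s', a)) :
    ∑ s : NState N, (∑ a : Fin N, x (s, a)) * ∏ i : Fin N, (if s.2 i then (0:ℝ) else 1)
      = (p10 / (p10 + p01)) ^ N := by
  classical
  have hpq : p10 + p01 ≠ 0 := by positivity
  have hb : ∀ b : Bool, (if b then (0:ℝ) else 1)
      = p10 / (p10 + p01) * (1 - hfun p01 p10 b) := by
    intro b
    cases b
    · simp only [Bool.false_eq_true, if_false, hfun]
      field_simp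
      ring
    · simp [hfun]
  have hprod : ∀ c : Fin N → Bool,
      (∏ i : Fin N, (if c i then (0:ℝ) else 1))
        = (p10 / (p10 + p01)) ^ N *
          ∑ t ∈ (Finset.univ : Finset (Fin N)).powerset,
            ∏ i ∈ t, (-hfun p01 p10 (c i)) := by
    intro c
    calc ∏ i : Fin N, (if c i then (0:ℝ) else 1)
        = ∏ i : Fin N, (p10 / (p10 + p01) * (1 - hfun p01 p10 (c i))) := by
          exact Finset.prod_congr rfl fun i _ => by rw [hb]
      _ = (p10 / (p10 + p01)) ^ N *
            ∏ i : Fin N, ((-hfun p01 p10 (c i)) + 1) := by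
          rw [Finset.prod_mul_distrib, Finset.prod_const, Finset.card_univ,
            Fintype.card_fin]
          congr 1
          exact Finset.prod_congr rfl fun i _ => by ring
      _ = _ := by
          rw [Finset.prod_add]
          congr 1
          exact Finset.sum_congr rfl fun t _ => by rw [Finset.prod_const_one, mul_one]
  have hterm : ∀ t ∈ (Finset.univ : Finset (Fin N)).powerset,
      (∑ s : NState N, (∑ a : Fin N, x (s, a)) * ∏ i ∈ t, (-hfun p01 p10 (s.2 i)))
        = if t = ∅ then 1 else 0 := by
    intro t _
    by_cases ht : t = ∅
    · simp [ht, hmass]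
    · rw [if_neg ht]
      have hne : t.Nonempty := Finset.nonempty_of_ne_empty ht
      have hneg : ∀ c : Fin N → Bool,
          (∏ i ∈ t, (-hfun p01 p10 (c i)))
            = (-1 : ℝ) ^ t.card * ∏ i ∈ t, hfun p01 p10 (c i) := by
        intro c
        rw [← Finset.prod_const, ← Finset.prod_mul_distrib]
        exact Finset.prod_congr rfl fun i _ => by ring
      calc ∑ s : NState N, (∑ a : Fin N, x (s, a)) * ∏ i ∈ t, (-hfun p01 p10 (s.2 i))
          = (-1 : ℝ) ^ t.card *
              ∑ s : NState N, (∑ a : Fin N, x (s, a)) * ∏ i ∈ t, hfun p01 p10 (s.2 i) := by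
            rw [Finset.mul_sum]
            exact Finset.sum_congr rfl fun s _ => by rw [hneg s.2]; ring
        _ = 0 := by
            rw [moment_zero N p01 p10 h01 h10 hsum x hbal t hne, mul_zero]
  calc ∑ s : NState N, (∑ a : Fin N, x (s, a)) * ∏ i : Fin N, (if s.2 i then (0:ℝ) else 1)
      = ∑ s : NState N, (∑ a : Fin N, x (s, a)) *
          ((p10 / (p10 + p01)) ^ N * ∑ t ∈ (Finset.univ : Finset (Fin N)).powerset,
            ∏ i ∈ t, (-hfun p01 p10 (s.2 i))) := by
        exact Finset.sum_congr rfl fun s _ => by rw [hprod s.2]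
    _ = (p10 / (p10 + p01)) ^ N * ∑ t ∈ (Finset.univ : Finset (Fin N)).powerset,
          ∑ s : NState N, (∑ a : Fin N, x (s, a)) * ∏ i ∈ t, (-hfun p01 p10 (s.2 i)) := by
        have hper : ∀ s : NState N,
            (∑ a : Fin N, x (s, a)) * ((p10 / (p10 + p01)) ^ N *
              ∑ t ∈ (Finset.univ : Finset (Fin N)).powerset,
                ∏ i ∈ t, (-hfun p01 p10 (s.2 i)))
            = ∑ t ∈ (Finset.univ : Finset (Fin N)).powerset,
                (p10 / (p10 + p01)) ^ N *
                  ((∑ a : Fin N, x (s, a)) * ∏ i ∈ t, (-hfun p01 p10 (s.2 i))) := by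
          intro s
          rw [Finset.mul_sum, Finset.mul_sum]
          exact Finset.sum_congr rfl fun t _ => by ring
        rw [Finset.sum_congr rfl fun s _ => hper s, Finset.sum_comm, Finset.mul_sum]
        exact Finset.sum_congr rfl fun t _ => (Finset.mul_sum _ _ _).symm
    _ = (p10 / (p10 + p01)) ^ N := by
        rw [Finset.sum_congr rfl hterm]
        rw [Finset.sum_ite_eq' _ (∅ : Finset (Fin N)) (fun _ => (1:ℝ))]
        simp

/-- Sum-rate upper bound: with `C₀ = (p₁₀/(p₁₀+p₀₁))^N`, every `x` in the state-action
polytope satisfies `Σᵢ rᵢ(x) ≤ 1 - C₀ - (p₁₀(1-C₀) - p₀₁ C₀)`. -/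
theorem sum_rate_upper_bound (N : ℕ) (hN : 2 ≤ N) (p01 p10 : ℝ)
    (h01 : p01 ∈ Set.Ioo (0 : ℝ) 1) (h10 : p10 ∈ Set.Ioo (0 : ℝ) 1)
    (hsum : p01 + p10 ≤ 1) :
    ∀ x ∈ NX N p01 p10,
      ∑ i : Fin N, Nrate N x i ≤
        1 - (p10 / (p10 + p01)) ^ N -
          (p10 * (1 - (p10 / (p10 + p01)) ^ N) - p01 * (p10 / (p10 + p01)) ^ N) := by
  rintro x ⟨hnn, hmass, hbal⟩
  obtain ⟨h01a, h01b⟩ := h01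
  obtain ⟨h10a, h10b⟩ := h10
  set C0 : ℝ := (p10 / (p10 + p01)) ^ N with hC0
  set L : ℝ := 1 - p01 - p10 with hLdef
  have hmass' : ∑ s : NState N, (∑ a : Fin N, x (s, a)) = 1 := by
    rw [← hmass]; exact (Fintype.sum_prod_type _).symm
  -- the all-OFF probability
  have hA : ∑ s : NState N, (∑ a : Fin N, x (s, a)) *
      ∏ i : Fin N, (if s.2 i then (0:ℝ) else 1) = C0 :=
    alloff_prob N p01 p10 h01a h10a hsum x hmass' hbal
  -- T = expected indicator that the current served channel is ON
  set T : ℝ := ∑ s : NState N, (∑ a : Fin N, x (s, a)) *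
    (if s.2 s.1 then (1:ℝ) else 0) with hT
  -- Step 1 : sum of rates is at most T
  have step1 : ∑ i : Fin N, Nrate N x i ≤ T := by
    rw [hT, Fintype.sum_prod_type]
    unfold Nrate
    refine Finset.sum_le_sum fun i _ => Finset.sum_le_sum fun c _ => ?_
    by_cases h : c i
    · rw [if_pos h, if_pos h, mul_one]
      exact Finset.single_le_sum (fun a _ => hnn ((i, c), a)) (Finset.mem_univ i)
    · rw [if_neg h, if_neg h, mul_zero]
  -- Step 2 : compute T via the balance equations
  set Q : ℝ := ∑ s' : NState N, ∑ a : Fin N, x (s', a) *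
    (if s'.2 a then (1:ℝ) else 0) with hQ
  have hchT : ∀ b : Bool, chTrans p01 p10 b true = if b then 1 - p10 else p01 := by
    intro b; cases b <;> simp [chTrans]
  have step2 : T = ∑ s' : NState N, ∑ a : Fin N, x (s', a) *
      (if s'.2 a then 1 - p10 else p01) := by
    rw [hT, swapE N p01 p10 x hbal]
    refine Finset.sum_congr rfl fun s' _ => Finset.sum_congr rfl fun a _ => ?_
    congr 1
    have hfix : ∀ s : NState N,
        NP N p01 p10 s s' a * (if s.2 s.1 then (1:ℝ) else 0)
          = NP N p01 p10 s s' a *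
            ∏ i : Fin N, (if i = a then (if s.2 i then (1:ℝ) else 0) else 1) := by
      intro s
      by_cases hsa : s.1 = a
      · rw [Finset.prod_ite_eq' Finset.univ a (fun i => if s.2 i then (1:ℝ) else 0)]
        rw [if_pos (Finset.mem_univ a), hsa]
      · have : NP N p01 p10 s s' a = 0 := by simp [NP, hsa]
        rw [this, zero_mul, zero_mul]
    rw [Finset.sum_congr rfl fun s _ => hfix s]
    rw [inner_NP N p01 p10 s' a (fun i b => if i = a then (if b then (1:ℝ) else 0) else 1)]
    have hfac : ∀ i : Fin N,
        (chTrans p01 p10 (s'.2 i) false * (if i = a then (if false then (1:ℝ) else 0) else 1)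
          + chTrans p01 p10 (s'.2 i) true * (if i = a then (if true then (1:ℝ) else 0) else 1))
        = if i = a then (if s'.2 a then 1 - p10 else p01) else 1 := by
      intro i
      by_cases hi : i = a
      · subst hi
        simp only [if_pos rfl, if_true, Bool.false_eq_true, if_false, mul_zero, mul_one,
          zero_add]
        exact hchT (s'.2 i)
      · simp only [if_neg hi, mul_one]
        exact chTrans_sum p01 p10 (s'.2 i)
    rw [Finset.prod_congr rfl fun i _ => hfac i]
    rw [Finset.prod_ite_eq' Finset.univ a (fun _ => if s'.2 a then 1 - p10 else p01)]
    rw [if_pos (Finset.mem_univ a)]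
  -- Step 3 : T = p01 + L * Q
  have step3 : T = p01 + L * Q := by
    rw [step2, hQ]
    have hsplit : ∀ (s' : NState N) (a : Fin N),
        x (s', a) * (if s'.2 a then 1 - p10 else p01)
          = x (s', a) * p01 + L * (x (s', a) * (if s'.2 a then (1:ℝ) else 0)) := by
      intro s' a
      by_cases h : s'.2 a <;> simp [h, hLdef] <;> ring
    rw [Finset.sum_congr rfl fun s' _ => Finset.sum_congr rfl fun a _ => hsplit s' a]
    simp only [Finset.sum_add_distrib, ← Finset.sum_mul, ← Finset.mul_sum]
    rw [hmass', one_mul]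
  -- Step 4 : Q ≤ 1 - C0
  have step4 : Q ≤ 1 - C0 := by
    have hA' : ∑ s : NState N, ∑ a : Fin N, x (s, a) *
        ∏ i : Fin N, (if s.2 i then (0:ℝ) else 1) = C0 := by
      rw [← hA]
      exact Finset.sum_congr rfl fun s _ => (Finset.sum_mul _ _ _).symm
    have hQC : Q + C0 ≤ 1 := by
      rw [hQ, ← hA']
      have hcomb : (∑ s' : NState N, ∑ a : Fin N, x (s', a) * (if s'.2 a then (1:ℝ) else 0))
          + (∑ s : NState N, ∑ a : Fin N, x (s, a) *
              ∏ i : Fin N, (if s.2 i then (0:ℝ) else 1))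
          = ∑ s : NState N, ∑ a : Fin N, x (s, a) * ((if s.2 a then (1:ℝ) else 0)
              + ∏ i : Fin N, (if s.2 i then (0:ℝ) else 1)) := by
        rw [← Finset.sum_add_distrib]
        refine Finset.sum_congr rfl fun s _ => ?_
        rw [← Finset.sum_add_distrib]
        exact Finset.sum_congr rfl fun a _ => (mul_add _ _ _).symm
      rw [hcomb]
      refine le_trans ?_ (le_of_eq hmass')
      refine Finset.sum_le_sum fun s _ => ?_
      refine Finset.sum_le_sum fun a _ => ?_
      have hub : (if s.2 a then (1:ℝ) else 0) +
          (∏ i : Fin N, (if s.2 i then (0:ℝ) else 1)) ≤ 1 := by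
        by_cases h : s.2 a
        · rw [if_pos h]
          have : (∏ i : Fin N, (if s.2 i then (0:ℝ) else 1)) = 0 :=
            Finset.prod_eq_zero (Finset.mem_univ a) (by rw [if_pos h])
          rw [this]; norm_num
        · rw [if_neg h]
          have : (∏ i : Fin N, (if s.2 i then (0:ℝ) else 1)) ≤ 1 := by
            apply Finset.prod_le_one
            · intro i _; by_cases hi : s.2 i <;> simp [hi]
            · intro i _; by_cases hi : s.2 i <;> simp [hi]
          linarith
      calc x (s, a) * ((if s.2 a then (1:ℝ) else 0) +
              ∏ i : Fin N, (if s.2 i then (0:ℝ) else 1))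
          ≤ x (s, a) * 1 := mul_le_mul_of_nonneg_left hub (hnn (s, a))
        _ = x (s, a) := mul_one _
    linarith
  -- conclusion
  have hL0 : 0 ≤ L := by rw [hLdef]; linarith
  have hfin : p01 + L * (1 - C0) =
      1 - C0 - (p10 * (1 - C0) - p01 * C0) := by rw [hLdef]; ring
  calc ∑ i : Fin N, Nrate N x i ≤ T := step1
    _ = p01 + L * Q := step3
    _ ≤ p01 + L * (1 - C0) := by nlinarith [mul_le_mul_of_nonneg_left step4 hL0]
    _ = _ := hfin
end

section
/- Fix N ≥ 2 and p₁, …, p_N ∈ (0,1]. In the N-queue model with memoryless (i.i.d.) channels, the set of rate vectors { (r₁(x), …, r_N(x)) : x ∈ X } equals the simplex { r ∈ ℝ^N : r_i ≥ 0 for all i, and Σ_{i=1}^N r_i / p_i ≤ 1 }. -/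
open Finset

/-- Transition probability for memoryless (i.i.d.) channels: from state `s` under
action `a`, the next location is `a`, and independently the next value of channel `i`
is ON with probability `p i` regardless of its current value. -/
noncomputable def NPiid (N : ℕ) (p : Fin N → ℝ) (s' s : NState N) (a : Fin N) : ℝ :=
  (if s'.1 = a then (1 : ℝ) else 0) *
    ∏ i : Fin N, (if s'.2 i then p i else 1 - p i)

/-- The state-action polytope `X` for the memoryless-channel model. -/
def NXiid (N : ℕ) (p : Fin N → ℝ) : Set (NState N × Fin N → ℝ) :=
  {x | (∀ sa, 0 ≤ x sa) ∧ (∑ sa : NState N × Fin N, x sa) = 1 ∧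
    ∀ s : NState N, (∑ a : Fin N, x (s, a)) =
      ∑ s' : NState N, ∑ a : Fin N, NPiid N p s s' a * x (s', a)}

/-! ### Auxiliary lemmas -/

/-- Sum over Boolean vectors of a product factorizes. -/
lemma sum_bool_prod {N : ℕ} (g : Fin N → Bool → ℝ) :
    ∑ c : Fin N → Bool, ∏ i, g i (c i) = ∏ i, (g i true + g i false) := by
  rw [← Fintype.piFinset_univ, Finset.sum_prod_piFinset]
  simp [add_comm]

/-- Product probability of a channel-state vector. -/
noncomputable def Npi {N : ℕ} (p : Fin N → ℝ) (c : Fin N → Bool) : ℝ :=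
  ∏ i : Fin N, (if c i then p i else 1 - p i)

lemma Npi_nonneg {N : ℕ} {p : Fin N → ℝ} (hp : ∀ i, p i ∈ Set.Ioc (0 : ℝ) 1)
    (c : Fin N → Bool) : 0 ≤ Npi p c := by
  refine Finset.prod_nonneg fun i _ => ?_
  rcases hp i with ⟨h1, h2⟩
  split <;> linarith

lemma sum_Npi {N : ℕ} {p : Fin N → ℝ} : ∑ c : Fin N → Bool, Npi p c = 1 := by
  unfold Npi
  rw [sum_bool_prod fun i b => if b then p i else 1 - p i]
  simp

lemma sum_Npi_cond {N : ℕ} {p : Fin N → ℝ} (i : Fin N) :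
    ∑ c : Fin N → Bool, (if c i then Npi p c else 0) = p i := by
  set g : Fin N → Bool → ℝ :=
    fun j b => if j = i then (if b then p j else 0) else (if b then p j else 1 - p j) with hg
  have h : ∀ c : Fin N → Bool, (if c i then Npi p c else 0) = ∏ j, g j (c j) := by
    intro c
    by_cases hc : c i
    · rw [if_pos hc]
      refine Finset.prod_congr rfl fun j _ => ?_
      by_cases hj : j = i
      · subst hj; simp [hg, hc]
      · simp [hg, hj]
    · rw [if_neg hc]
      rw [eq_comm, Finset.prod_eq_zero (Finset.mem_univ i)]
      simp [hg, hc]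
  simp_rw [h]
  rw [sum_bool_prod g]
  have h2 : ∀ j : Fin N, g j true + g j false = if j = i then p j else 1 := by
    intro j; by_cases hj : j = i <;> simp [hg, hj]
  simp_rw [h2]
  rw [Finset.prod_ite_eq' Finset.univ i p]
  simp

/-- For memoryless (i.i.d.) channels with ON probabilities `pᵢ ∈ (0,1]`, the set of
achievable rate vectors equals the simplex `{r : rᵢ ≥ 0, Σᵢ rᵢ/pᵢ ≤ 1}`. -/
theorem rate_region_iid (N : ℕ) (hN : 2 ≤ N) (p : Fin N → ℝ)
    (hp : ∀ i, p i ∈ Set.Ioc (0 : ℝ) 1) :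
    {r : Fin N → ℝ | ∃ x ∈ NXiid N p, r = Nrate N x} =
      {r : Fin N → ℝ | (∀ i, 0 ≤ r i) ∧ ∑ i : Fin N, r i / p i ≤ 1} := by
  ext r
  simp only [Set.mem_setOf_eq]
  constructor
  · rintro ⟨x, ⟨hx0, hx1, hxb⟩, rfl⟩
    -- the balance equation in simplified form
    have hbal : ∀ m : Fin N, ∀ c : Fin N → Bool,
        (∑ a : Fin N, x ((m, c), a)) = Npi p c * ∑ s' : NState N, x (s', m) := by
      intro m c
      rw [hxb (m, c)]
      rw [Finset.mul_sum]
      refine Finset.sum_congr rfl fun s' _ => ?_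
      simp only [NPiid, Npi]
      rw [Finset.sum_eq_single m]
      · simp [mul_comm]
      · intro b _ hb
        simp [Ne.symm hb]
      · simp
    set y : Fin N → ℝ := fun m => ∑ s' : NState N, x (s', m) with hy
    have hrate_le : ∀ i, Nrate N x i ≤ p i * y i := by
      intro i
      have step1 : Nrate N x i ≤ ∑ c : Fin N → Bool,
          (if c i then (∑ a : Fin N, x ((i, c), a)) else 0) := by
        refine Finset.sum_le_sum fun c _ => ?_
        by_cases hc : c i
        · simp only [if_pos hc]
          exact Finset.single_le_sum (fun a _ => hx0 _) (Finset.mem_univ i)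
        · simp [hc]
      refine step1.trans ?_
      have : ∀ c : Fin N → Bool, (if c i then (∑ a : Fin N, x ((i, c), a)) else 0)
          = (if c i then Npi p c else 0) * y i := by
        intro c; by_cases hc : c i <;> simp [hc, hbal, hy]
      simp_rw [this]
      rw [← Finset.sum_mul, sum_Npi_cond i]
    have hrnn : ∀ i, 0 ≤ Nrate N x i := by
      intro i
      refine Finset.sum_nonneg fun c _ => ?_
      split
      · exact hx0 _
      · exact le_rfl
    refine ⟨hrnn, ?_⟩
    have hsum_y : ∑ i : Fin N, y i = 1 := by
      rw [← hx1, Fintype.sum_prod_type]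
      show ∑ i : Fin N, ∑ s' : NState N, x (s', i) = _
      rw [Finset.sum_comm]
    calc ∑ i : Fin N, Nrate N x i / p i ≤ ∑ i : Fin N, y i := by
          refine Finset.sum_le_sum fun i _ => ?_
          rw [div_le_iff₀ (hp i).1]
          rw [mul_comm (y i) (p i)] at *
          exact hrate_le i
      _ = 1 := hsum_y
  · rintro ⟨hr0, hr1⟩
    -- construction
    obtain ⟨i0, i1, hne⟩ : ∃ i0 i1 : Fin N, i0 ≠ i1 :=
      ⟨⟨0, by omega⟩, ⟨1, by omega⟩, by simp [Fin.ext_iff]⟩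
    set δ : ℝ := 1 - ∑ i : Fin N, r i / p i with hδdef
    have hδ : 0 ≤ δ := by simp [hδdef]; linarith
    set w : Fin N → Fin N → ℝ := fun m a =>
      if (m = i0 ∧ a = i1) ∨ (m = i1 ∧ a = i0) then (1:ℝ)/2 else 0 with hw
    set z : Fin N → Fin N → ℝ := fun m a =>
      (if m = a then r m / p m else 0) + δ * w m a with hz
    have hz0 : ∀ m a, 0 ≤ z m a := by
      intro m a
      refine add_nonneg ?_ (mul_nonneg hδ ?_)
      · split
        · exact div_nonneg (hr0 m) (hp m).1.le
        · exact le_rfl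
      · simp only [hw]; split <;> norm_num
    have hzdiag : ∀ i, z i i = r i / p i := by
      intro i
      simp only [hz, hw]
      have : ¬((i = i0 ∧ i = i1) ∨ (i = i1 ∧ i = i0)) := by
        rintro (⟨rfl, rfl⟩ | ⟨rfl, rfl⟩) <;> exact hne rfl
      simp [this]
    have hwrow : ∀ m, ∑ a : Fin N, w m a = if m = i0 ∨ m = i1 then (1:ℝ)/2 else 0 := by
      intro m
      by_cases h0 : m = i0
      · subst h0
        rw [if_pos (Or.inl rfl)]
        simp only [hw]
        rw [Finset.sum_eq_single i1]
        · simp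
        · intro b _ hb; simp [hb, hne]
        · simp
      · by_cases h1 : m = i1
        · subst h1
          rw [if_pos (Or.inr rfl)]
          simp only [hw]
          rw [Finset.sum_eq_single i0]
          · simp [Ne.symm hne]
          · intro b _ hb; simp [hb, Ne.symm hne]
          · simp
        · rw [if_neg (by tauto)]
          simp only [hw]
          refine Finset.sum_eq_zero fun a _ => ?_
          simp [h0, h1]
    have hwsym : ∀ m a, w m a = w a m := by
      intro m a
      simp only [hw]
      congr 1
      simp only [eq_iff_iff]; tauto
    have hzbal : ∀ m, ∑ a : Fin N, z m a = ∑ a : Fin N, z a m := by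
      intro m
      simp only [hz]
      rw [Finset.sum_add_distrib, Finset.sum_add_distrib]
      congr 1
      · rw [Finset.sum_eq_single m, Finset.sum_eq_single m]
        · intro b _ hb; simp [hb]
        · simp
        · intro b _ hb; simp [Ne.symm hb]
        · simp
      · exact Finset.sum_congr rfl fun a _ => by rw [hwsym]
    have hrowsum : ∀ m, ∑ a : Fin N, z m a
        = r m / p m + δ * (if m = i0 ∨ m = i1 then (1:ℝ)/2 else 0) := by
      intro m
      simp only [hz]
      rw [Finset.sum_add_distrib, ← Finset.mul_sum, hwrow]
      congr 1
      rw [Finset.sum_eq_single m]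
      · simp
      · intro b _ hb; simp [Ne.symm hb]
      · simp
    have hztot : ∑ m : Fin N, ∑ a : Fin N, z m a = 1 := by
      simp_rw [hrowsum]
      rw [Finset.sum_add_distrib, ← Finset.mul_sum]
      have : ∑ m : Fin N, (if m = i0 ∨ m = i1 then (1:ℝ)/2 else 0) = 1 := by
        have hsplit : ∀ m : Fin N, (if m = i0 ∨ m = i1 then (1:ℝ)/2 else 0)
            = (if m = i0 then (1:ℝ)/2 else 0) + (if m = i1 then (1:ℝ)/2 else 0) := by
          intro m
          by_cases h0 : m = i0
          · subst h0; simp [hne]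
          · by_cases h1 : m = i1 <;> simp [h0, h1, Ne.symm hne]
        simp_rw [hsplit]
        rw [Finset.sum_add_distrib, Finset.sum_ite_eq' Finset.univ i0 (fun _ => (1:ℝ)/2),
          Finset.sum_ite_eq' Finset.univ i1 (fun _ => (1:ℝ)/2)]
        simp; norm_num
      rw [this, mul_one]
      simp [hδdef]
    set x : NState N × Fin N → ℝ := fun sa => Npi p sa.1.2 * z sa.1.1 sa.2 with hxdef
    refine ⟨x, ⟨?_, ?_, ?_⟩, ?_⟩
    · intro sa
      exact mul_nonneg (Npi_nonneg hp _) (hz0 _ _)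
    · rw [Fintype.sum_prod_type]
      simp only [hxdef]
      have : ∀ s : NState N, ∑ a : Fin N, Npi p s.2 * z s.1 a
          = Npi p s.2 * ∑ a : Fin N, z s.1 a := by
        intro s; rw [Finset.mul_sum]
      simp_rw [this]
      rw [Fintype.sum_prod_type]
      have h2 : ∀ m : Fin N, ∑ c : Fin N → Bool, Npi p c * ∑ a : Fin N, z m a
          = ∑ a : Fin N, z m a := by
        intro m
        rw [← Finset.sum_mul, sum_Npi, one_mul]
      simp_rw [h2]
      exact hztot
    · rintro ⟨m, c⟩
      have hLHS : ∑ a : Fin N, x ((m, c), a) = Npi p c * ∑ a : Fin N, z m a := by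
        simp only [hxdef]
        rw [Finset.mul_sum]
      rw [hLHS]
      have hNP : ∀ (s s' : NState N) (a : Fin N), NPiid N p s s' a
          = (if s.1 = a then 1 else 0) * Npi p s.2 := fun _ _ _ => rfl
      have hRHS : ∀ s' : NState N, ∑ a : Fin N, NPiid N p (m, c) s' a * x (s', a)
          = Npi p c * (Npi p s'.2 * z s'.1 m) := by
        intro s'
        simp only [hNP, hxdef]
        rw [Finset.sum_eq_single m]
        · rw [if_pos rfl, one_mul]
        · intro b _ hb
          rw [if_neg (by exact Ne.symm hb)]
          ring
        · simp
      simp_rw [hRHS]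
      rw [← Finset.mul_sum]
      congr 1
      have hstep : ∑ s' : NState N, Npi p s'.2 * z s'.1 m = ∑ m' : Fin N, z m' m := by
        rw [Fintype.sum_prod_type]
        dsimp only
        refine Finset.sum_congr rfl fun m' _ => ?_
        rw [← Finset.sum_mul, sum_Npi, one_mul]
      rw [hstep, ← hzbal m]
    · funext i
      simp only [Nrate, hxdef]
      have : ∀ c : Fin N → Bool, (if c i then Npi p c * z i i else 0)
          = (if c i then Npi p c else 0) * z i i := by
        intro c; by_cases hc : c i <;> simp [hc]
      simp_rw [this]
      rw [← Finset.sum_mul, sum_Npi_cond i, hzdiag i]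
      rw [mul_div_cancel₀ (r i) (ne_of_gt (hp i).1)]
end

section
/- For every ε ∈ [1 − √2/2, 1/2], the quantity (ε/(1−ε))·( 3/4 − ε + ε/(4(2−ε)) ) + 3/4 − ε/(4(2−ε)) is at least (2√2 − 1)/2, with equality at ε = 1 − √2/2. (Numerically, (2√2 − 1)/2 ≈ 0.914, so the 1-Lookahead Myopic policy attains at least 91.4% of the optimal weighted departure rate in this discrepant region.) -/
/-- For every `ε ∈ [1-√2/2, 1/2]`, the lower bound
`(ε/(1-ε))(3/4 - ε + ε/(4(2-ε))) + 3/4 - ε/(4(2-ε))` on the weighted departure-rate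
ratio is at least `(2√2 - 1)/2`, with equality at `ε = 1 - √2/2`. -/
theorem myopic_ratio_bound_b1_b0 :
    (∀ ε : ℝ, ε ∈ Set.Icc (1 - Real.sqrt 2 / 2) (1 / 2) →
      (ε / (1 - ε)) * (3 / 4 - ε + ε / (4 * (2 - ε))) + 3 / 4 - ε / (4 * (2 - ε)) ≥
        (2 * Real.sqrt 2 - 1) / 2) ∧
    ((1 - Real.sqrt 2 / 2) / (1 - (1 - Real.sqrt 2 / 2)) *
        (3 / 4 - (1 - Real.sqrt 2 / 2) +
          (1 - Real.sqrt 2 / 2) / (4 * (2 - (1 - Real.sqrt 2 / 2)))) +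
      3 / 4 - (1 - Real.sqrt 2 / 2) / (4 * (2 - (1 - Real.sqrt 2 / 2))) =
      (2 * Real.sqrt 2 - 1) / 2) := by
  have hs2 : Real.sqrt 2 ^ 2 = 2 := Real.sq_sqrt (by norm_num)
  have hs1 : 1 < Real.sqrt 2 := by nlinarith [Real.sqrt_nonneg 2]
  have hs32 : Real.sqrt 2 < 3 / 2 := by nlinarith [Real.sqrt_nonneg 2]
  have key : ∀ ε : ℝ, 0 < 1 - ε → 0 < 2 - ε →
      (ε / (1 - ε)) * (3 / 4 - ε + ε / (4 * (2 - ε))) + 3 / 4 - ε / (4 * (2 - ε))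
        - (2 * Real.sqrt 2 - 1) / 2
        = (2 * (ε - (1 - Real.sqrt 2 / 2)) * ((3 * Real.sqrt 2 - 2) / 2 - ε))
          / (2 * (2 - ε)) := by
    intro ε h1 h2
    field_simp
    ring_nf
    rw [hs2]
    ring_nf
  constructor
  · intro ε hε
    obtain ⟨hl, hr⟩ := hε
    have h1 : (0:ℝ) < 1 - ε := by linarith
    have h2 : (0:ℝ) < 2 - ε := by linarith
    rw [ge_iff_le, ← sub_nonneg, key ε h1 h2]
    apply div_nonneg
    · have h3 : 0 ≤ ε - (1 - Real.sqrt 2 / 2) := by linarith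
      have h4 : 0 ≤ (3 * Real.sqrt 2 - 2) / 2 - ε := by linarith
      nlinarith
    · linarith
  · have h1 : (0:ℝ) < 1 - (1 - Real.sqrt 2 / 2) := by linarith
    have h2 : (0:ℝ) < 2 - (1 - Real.sqrt 2 / 2) := by linarith
    have := key (1 - Real.sqrt 2 / 2) h1 h2
    simp only [sub_self, mul_zero, zero_mul, zero_div] at this
    linarith [this]
end

section
/- For every ε ∈ [0, 1 − √2/2], the quantity ((1−ε)/(2−ε))·( 3/4 − ε + ε/(4(2−ε)) ) + 3/4 − ε/(4(2−ε)) is at least (2√2 − 1)/2, with equality at ε = 1 − √2/2. -/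
/-- For every `ε ∈ [0, 1-√2/2]`, the lower bound
`((1-ε)/(2-ε))(3/4 - ε + ε/(4(2-ε))) + 3/4 - ε/(4(2-ε))` on the weighted departure-rate
ratio is at least `(2√2 - 1)/2`, with equality at `ε = 1 - √2/2`. -/
theorem myopic_ratio_bound_b2_b0 :
    (∀ ε : ℝ, ε ∈ Set.Icc (0 : ℝ) (1 - Real.sqrt 2 / 2) →
      ((1 - ε) / (2 - ε)) * (3 / 4 - ε + ε / (4 * (2 - ε))) + 3 / 4 - ε / (4 * (2 - ε)) ≥
        (2 * Real.sqrt 2 - 1) / 2) ∧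
    ((1 - (1 - Real.sqrt 2 / 2)) / (2 - (1 - Real.sqrt 2 / 2)) *
        (3 / 4 - (1 - Real.sqrt 2 / 2) +
          (1 - Real.sqrt 2 / 2) / (4 * (2 - (1 - Real.sqrt 2 / 2)))) +
      3 / 4 - (1 - Real.sqrt 2 / 2) / (4 * (2 - (1 - Real.sqrt 2 / 2))) =
      (2 * Real.sqrt 2 - 1) / 2) := by
  have hs : Real.sqrt 2 ^ 2 = 2 := Real.sq_sqrt (by norm_num)
  have hsn : (0:ℝ) ≤ Real.sqrt 2 := Real.sqrt_nonneg 2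
  have hs1 : (1:ℝ) < Real.sqrt 2 := by nlinarith
  have hs2 : Real.sqrt 2 < 3/2 := by nlinarith
  constructor
  · intro ε hε
    obtain ⟨h0, h1⟩ := hε
    have hε1 : ε < 1 := by linarith
    have hd : (0:ℝ) < 2 - ε := by linarith
    have hne : (2:ℝ) - ε ≠ 0 := ne_of_gt hd
    rw [ge_iff_le, ← sub_nonneg]
    have key : ((1 - ε) / (2 - ε)) * (3 / 4 - ε + ε / (4 * (2 - ε))) + 3 / 4 -
        ε / (4 * (2 - ε)) - (2 * Real.sqrt 2 - 1) / 2 =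
        (18 - 30*ε + 18*ε^2 - 4*ε^3 - 2*(2*Real.sqrt 2 - 1)*(2-ε)^2) / (4*(2-ε)^2) := by
      field_simp
      ring
    rw [key]
    apply div_nonneg
    · have ht : 0 ≤ 1 - Real.sqrt 2 / 2 - ε := by linarith
      nlinarith [mul_nonneg ht h0, mul_nonneg (mul_nonneg ht h0) h0,
        mul_nonneg ht (mul_nonneg hsn h0), sq_nonneg ε]
    · positivity
  · have hne : (2:ℝ) + Real.sqrt 2 ≠ 0 := by positivity
    have h2 : (2:ℝ) - (1 - Real.sqrt 2 / 2) = (2 + Real.sqrt 2)/2 := by ring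
    rw [h2]
    field_simp
    ring_nf
    linear_combination (-16 - 4*Real.sqrt 2) * hs
end

section
/- Fix ε ∈ (0, 1). Then every x in the state-action polytope X(ε) of the symmetric Gilbert–Elliot two-queue model has uniform channel marginals: for each fixed channel pair (c₁, c₂) ∈ {0,1}², the sum Σ_{m ∈ {1,2}} Σ_{a ∈ {stay, switch}} x((m, c₁, c₂), a) equals 1/4. -/
open Finset

/-- Auxiliary linear-algebra lemma: solving the 4-state channel-pair chain. -/
lemma solve4 (ε a b c d : ℝ) (hε0 : 0 < ε) (hε1 : ε < 1)
    (eA : a = (1-ε)*(1-ε)*a + (1-ε)*ε*b + ε*(1-ε)*c + ε*ε*d)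
    (eB : b = (1-ε)*ε*a + (1-ε)*(1-ε)*b + ε*ε*c + ε*(1-ε)*d)
    (eC : c = ε*(1-ε)*a + ε*ε*b + (1-ε)*(1-ε)*c + (1-ε)*ε*d)
    (eD : d = ε*ε*a + ε*(1-ε)*b + (1-ε)*ε*c + (1-ε)*(1-ε)*d)
    (hs : a + b + c + d = 1) :
    a = 1/4 ∧ b = 1/4 ∧ c = 1/4 ∧ d = 1/4 := by
  have hεne : (2:ℝ)*ε ≠ 0 := by positivity
  have had : a = d := by
    have h : (2*ε) * (a - d) = 0 := by linear_combination eA - eD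
    have := (mul_eq_zero.mp h).resolve_left hεne
    linarith
  have hbc : b = c := by
    have h : (2*ε) * (b - c) = 0 := by linear_combination eB - eC
    have := (mul_eq_zero.mp h).resolve_left hεne
    linarith
  have h1ε : (0:ℝ) < 1 - ε := by linarith
  have hε2 : (2:ℝ)*ε*(1-ε) ≠ 0 := by positivity
  have hab : a = b := by
    have h : (2*ε*(1-ε)) * (a - b) = 0 := by
      linear_combination (1/2)*(eA - eB) + (ε*(1-2*ε)/2)*had - (ε*(1-2*ε)/2)*hbc
    have := (mul_eq_zero.mp h).resolve_left hε2
    linarith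
  refine ⟨by linarith, by linarith, by linarith, by linarith⟩

/-- For `ε ∈ (0, 1)`, every `x` in the state-action polytope `X(ε)` has uniform channel
marginals: for each fixed channel pair `(c₁, c₂)`, the total state-action frequency of
states with that channel pair equals `1/4`. -/
theorem uniform_channel_marginals (ε : ℝ) (hε : ε ∈ Set.Ioo (0 : ℝ) 1) :
    ∀ x ∈ GEX ε, ∀ c₁ c₂ : Bool,
      (∑ m : Bool, ∑ a : Bool, x ((m, c₁, c₂), a)) = 1 / 4 := by
  rintro x ⟨-, hsum, hbal⟩ c₁ c₂
  have h1 := hbal (true, true, true)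
  have h2 := hbal (false, true, true)
  have h3 := hbal (true, true, false)
  have h4 := hbal (false, true, false)
  have h5 := hbal (true, false, true)
  have h6 := hbal (false, false, true)
  have h7 := hbal (true, false, false)
  have h8 := hbal (false, false, false)
  simp only [Fintype.sum_prod_type, Fintype.sum_bool, GEP, chFlip] at h1 h2 h3 h4 h5 h6 h7 h8 hsum
  norm_num at h1 h2 h3 h4 h5 h6 h7 h8
  set a := x ((true,true,true),true) + x ((true,true,true),false)
    + x ((false,true,true),true) + x ((false,true,true),false) with ha_def
  set b := x ((true,true,false),true) + x ((true,true,false),false)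
    + x ((false,true,false),true) + x ((false,true,false),false) with hb_def
  set c := x ((true,false,true),true) + x ((true,false,true),false)
    + x ((false,false,true),true) + x ((false,false,true),false) with hc_def
  set d := x ((true,false,false),true) + x ((true,false,false),false)
    + x ((false,false,false),true) + x ((false,false,false),false) with hd_def
  have eA : a = (1-ε)*(1-ε)*a + (1-ε)*ε*b + ε*(1-ε)*c + ε*ε*d := by
    rw [ha_def, hb_def, hc_def, hd_def]; linear_combination h1 + h2
  have eB : b = (1-ε)*ε*a + (1-ε)*(1-ε)*b + ε*ε*c + ε*(1-ε)*d := by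
    rw [ha_def, hb_def, hc_def, hd_def]; linear_combination h3 + h4
  have eC : c = ε*(1-ε)*a + ε*ε*b + (1-ε)*(1-ε)*c + (1-ε)*ε*d := by
    rw [ha_def, hb_def, hc_def, hd_def]; linear_combination h5 + h6
  have eD : d = ε*ε*a + ε*(1-ε)*b + (1-ε)*ε*c + (1-ε)*(1-ε)*d := by
    rw [ha_def, hb_def, hc_def, hd_def]; linear_combination h7 + h8
  have hs : a + b + c + d = 1 := by
    rw [ha_def, hb_def, hc_def, hd_def]; linear_combination hsum
  obtain ⟨pa, pb, pc, pd⟩ := solve4 ε a b c d hε.1 hε.2 eA eB eC eD hs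
  rcases c₁ <;> rcases c₂ <;>
    simp only [Fintype.sum_bool] <;>
    [linear_combination pd; linear_combination pc; linear_combination pb; linear_combination pa]
end

section
/- Fix N ≥ 2 and p₀₁, p₁₀ ∈ (0,1). Then every x in the state-action polytope X of the Gilbert–Elliot N-queue model has product-form channel marginals: for each fixed channel vector c ∈ {0,1}^N, the sum Σ_{m=1}^N Σ_{a=1}^N x((m, c), a) equals ∏_{i=1}^N π(c_i), where π(1) = p₀₁/(p₀₁+p₁₀) and π(0) = p₁₀/(p₀₁+p₁₀). In particular, the total mass on states with all channels OFF equals C₀ = (p₁₀/(p₁₀+p₀₁))^N. -/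
open Finset

noncomputable def geφ (p01 p10 : ℝ) (b : Bool) : ℝ :=
  (if b then 1 else 0) - p01 / (p01 + p10)

lemma chTrans_rowsum (p01 p10 : ℝ) (b : Bool) :
    ∑ b' : Bool, chTrans p01 p10 b b' = 1 := by
  cases b <;> simp [chTrans] <;> ring

lemma chTrans_eigen_s18 (p01 p10 : ℝ) (h : p01 + p10 ≠ 0) (b : Bool) :
    ∑ b' : Bool, chTrans p01 p10 b b' * geφ p01 p10 b' = (1 - p01 - p10) * geφ p01 p10 b := by
  cases b <;> simp [chTrans, geφ] <;> field_simp <;> ring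

lemma delta_factor (p01 p10 : ℝ) (h : p01 + p10 ≠ 0) (a b : Bool) :
    (if a then p01 / (p01 + p10) else p10 / (p01 + p10))
      + (if a then (1:ℝ) else -1) * geφ p01 p10 b = if b = a then 1 else 0 := by
  cases a <;> cases b <;> simp [geφ] <;> field_simp <;> ring

lemma kernel_eigen (N : ℕ) (p01 p10 : ℝ) (h : p01 + p10 ≠ 0) (S : Finset (Fin N))
    (d : Fin N → Bool) :
    ∑ c : Fin N → Bool, (∏ i : Fin N, chTrans p01 p10 (d i) (c i))
        * ∏ i ∈ S, geφ p01 p10 (c i)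
      = (1 - p01 - p10) ^ S.card * ∏ i ∈ S, geφ p01 p10 (d i) := by
  have key : ∀ c : Fin N → Bool,
      (∏ i : Fin N, chTrans p01 p10 (d i) (c i)) * ∏ i ∈ S, geφ p01 p10 (c i)
      = ∏ i : Fin N, (chTrans p01 p10 (d i) (c i) *
          (if i ∈ S then geφ p01 p10 (c i) else 1)) := by
    intro c
    rw [Finset.prod_mul_distrib]
    congr 1
    rw [Finset.prod_ite_mem, Finset.univ_inter]
  simp_rw [key]
  rw [← Fintype.prod_sum (fun i b => chTrans p01 p10 (d i) b *
      (if i ∈ S then geφ p01 p10 b else 1))]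
  have : ∀ i : Fin N, (∑ b : Bool, chTrans p01 p10 (d i) b *
      (if i ∈ S then geφ p01 p10 b else 1))
      = if i ∈ S then (1 - p01 - p10) * geφ p01 p10 (d i) else 1 := by
    intro i
    by_cases hi : i ∈ S
    · simp only [hi, if_true]
      exact chTrans_eigen_s18 p01 p10 h (d i)
    · simp only [hi, if_false, mul_one]
      exact chTrans_rowsum p01 p10 (d i)
  rw [Fintype.prod_congr _ _ this, Finset.prod_ite_mem, Finset.univ_inter,
    Finset.prod_mul_distrib, Finset.prod_const]


/-- Product-form channel marginals: for every `x` in the state-action polytope and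
every channel vector `c`, the total state-action frequency of states with channel
vector `c` equals `∏ᵢ π(cᵢ)`, where `π(1) = p₀₁/(p₀₁+p₁₀)` and `π(0) = p₁₀/(p₀₁+p₁₀)`.
In particular the total mass on all-OFF states equals `C₀ = (p₁₀/(p₁₀+p₀₁))^N`. -/
theorem product_form_channel_marginals (N : ℕ) (hN : 2 ≤ N) (p01 p10 : ℝ)
    (h01 : p01 ∈ Set.Ioo (0 : ℝ) 1) (h10 : p10 ∈ Set.Ioo (0 : ℝ) 1) :
    ∀ x ∈ NX N p01 p10,
      (∀ c : Fin N → Bool,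
        (∑ m : Fin N, ∑ a : Fin N, x ((m, c), a)) =
          ∏ i : Fin N, (if c i then p01 / (p01 + p10) else p10 / (p01 + p10))) ∧
      (∑ m : Fin N, ∑ a : Fin N, x ((m, fun _ => false), a)) =
        (p10 / (p10 + p01)) ^ N := by
  intro x hx
  obtain ⟨hpos, hsum, hbal⟩ := hx
  obtain ⟨h01a, h01b⟩ := h01
  obtain ⟨h10a, h10b⟩ := h10
  have hne : p01 + p10 ≠ 0 := by positivity
  set ν : (Fin N → Bool) → ℝ := fun c => ∑ m : Fin N, ∑ a : Fin N, x ((m, c), a) with hν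
  -- stationarity of ν
  have hstat : ∀ c : Fin N → Bool,
      ν c = ∑ c' : Fin N → Bool, (∏ i : Fin N, chTrans p01 p10 (c' i) (c i)) * ν c' := by
    intro c
    have h1 : ∀ m : Fin N, (∑ a : Fin N, x ((m, c), a))
        = ∑ s' : NState N, (∏ i : Fin N, chTrans p01 p10 (s'.2 i) (c i)) * x (s', m) := by
      intro m
      rw [hbal (m, c)]
      refine Finset.sum_congr rfl fun s' _ => ?_
      have : ∀ a : Fin N, NP N p01 p10 (m, c) s' a * x (s', a)
          = if m = a then (∏ i : Fin N, chTrans p01 p10 (s'.2 i) (c i)) * x (s', a) else 0 := by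
        intro a
        by_cases h : m = a <;> simp [NP, h]
      simp_rw [this]
      rw [Finset.sum_ite_eq, if_pos (Finset.mem_univ m)]
    calc ν c = ∑ m : Fin N, ∑ s' : NState N,
          (∏ i : Fin N, chTrans p01 p10 (s'.2 i) (c i)) * x (s', m) := by
          simp only [hν]; exact Finset.sum_congr rfl fun m _ => h1 m
      _ = ∑ s' : NState N, ∑ m : Fin N,
          (∏ i : Fin N, chTrans p01 p10 (s'.2 i) (c i)) * x (s', m) := Finset.sum_comm
      _ = ∑ s' : NState N, (∏ i : Fin N, chTrans p01 p10 (s'.2 i) (c i))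
            * ∑ m : Fin N, x (s', m) := by simp_rw [Finset.mul_sum]
      _ = ∑ m' : Fin N, ∑ c' : Fin N → Bool, (∏ i : Fin N, chTrans p01 p10 (c' i) (c i))
            * ∑ m : Fin N, x ((m', c'), m) := by rw [Fintype.sum_prod_type]
      _ = ∑ c' : Fin N → Bool, ∑ m' : Fin N, (∏ i : Fin N, chTrans p01 p10 (c' i) (c i))
            * ∑ m : Fin N, x ((m', c'), m) := Finset.sum_comm
      _ = ∑ c' : Fin N → Bool, (∏ i : Fin N, chTrans p01 p10 (c' i) (c i)) * ν c' := by
          refine Finset.sum_congr rfl fun c' _ => ?_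
          rw [← Finset.mul_sum]
  -- total mass one
  have hmass : ∑ c : Fin N → Bool, ν c = 1 := by
    rw [← hsum, Fintype.sum_prod_type, Fintype.sum_prod_type]
    exact (Finset.sum_comm).symm
  -- correlations vanish
  have habs : |1 - p01 - p10| < 1 := by
    rw [abs_lt]; constructor <;> nlinarith
  have hT : ∀ S : Finset (Fin N), S ≠ ∅ →
      (∑ c : Fin N → Bool, ν c * ∏ i ∈ S, geφ p01 p10 (c i)) = 0 := by
    intro S hS
    have hself : (∑ c : Fin N → Bool, ν c * ∏ i ∈ S, geφ p01 p10 (c i))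
        = (1 - p01 - p10) ^ S.card
            * ∑ c : Fin N → Bool, ν c * ∏ i ∈ S, geφ p01 p10 (c i) := by
      calc (∑ c : Fin N → Bool, ν c * ∏ i ∈ S, geφ p01 p10 (c i))
          = (∑ c : Fin N → Bool, (∑ c' : Fin N → Bool,
              (∏ i : Fin N, chTrans p01 p10 (c' i) (c i)) * ν c')
              * ∏ i ∈ S, geφ p01 p10 (c i)) :=
            Finset.sum_congr rfl fun c _ => by rw [← hstat c]
        _ = ∑ c' : Fin N → Bool, ν c' * ∑ c : Fin N → Bool,
              (∏ i : Fin N, chTrans p01 p10 (c' i) (c i)) * ∏ i ∈ S, geφ p01 p10 (c i) := by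
            simp_rw [Finset.sum_mul, Finset.mul_sum]
            rw [Finset.sum_comm]
            refine Finset.sum_congr rfl fun c' _ => Finset.sum_congr rfl fun c _ => by ring
        _ = ∑ c' : Fin N → Bool, ν c'
              * ((1 - p01 - p10) ^ S.card * ∏ i ∈ S, geφ p01 p10 (c' i)) := by
            refine Finset.sum_congr rfl fun c' _ => ?_
            rw [kernel_eigen N p01 p10 hne S c']
        _ = (1 - p01 - p10) ^ S.card
              * ∑ c : Fin N → Bool, ν c * ∏ i ∈ S, geφ p01 p10 (c i) := by
            rw [Finset.mul_sum]
            refine Finset.sum_congr rfl fun c' _ => by ring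
    have hpow : (1 - p01 - p10) ^ S.card ≠ 1 := by
      intro hcon
      have h1 : |(1 - p01 - p10) ^ S.card| < 1 := by
        rw [abs_pow]
        exact pow_lt_one₀ (abs_nonneg _) habs (Finset.card_ne_zero.mpr (Finset.nonempty_iff_ne_empty.mpr hS))
      rw [hcon] at h1; simp at h1
    have := sub_eq_zero.mpr hself.symm
    have hfac : (1 - (1 - p01 - p10) ^ S.card)
        * (∑ c : Fin N → Bool, ν c * ∏ i ∈ S, geφ p01 p10 (c i)) = 0 := by
      rw [sub_mul, one_mul]
      linarith [hself]
    rcases mul_eq_zero.mp hfac with h | h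
    · exact absurd (by linarith : (1 - p01 - p10) ^ S.card = 1) hpow
    · exact h
  -- conclusion
  have hfin : ∀ c : Fin N → Bool,
      ν c = ∏ i : Fin N, (if c i then p01 / (p01 + p10) else p10 / (p01 + p10)) := by
    intro c
    have hdelta : ∀ c' : Fin N → Bool,
        (∏ i : Fin N, ((if c i then (1:ℝ) else -1) * geφ p01 p10 (c' i)
            + (if c i then p01 / (p01 + p10) else p10 / (p01 + p10))))
        = if c' = c then 1 else 0 := by
      intro c'
      have hi : ∀ i : Fin N, (if c i then (1:ℝ) else -1) * geφ p01 p10 (c' i)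
          + (if c i then p01 / (p01 + p10) else p10 / (p01 + p10))
          = if c' i = c i then 1 else 0 := by
        intro i
        rw [add_comm]
        exact delta_factor p01 p10 hne (c i) (c' i)
      rw [Fintype.prod_congr _ _ hi, Finset.prod_boole]
      congr 1
      simp [funext_iff, eq_iff_iff]
    have h0 : ν c = ∑ c' : Fin N → Bool, ν c'
        * ∏ i : Fin N, ((if c i then (1:ℝ) else -1) * geφ p01 p10 (c' i)
            + (if c i then p01 / (p01 + p10) else p10 / (p01 + p10))) := by
      simp_rw [hdelta, mul_ite, mul_one, mul_zero]
      rw [Finset.sum_ite_eq', if_pos (Finset.mem_univ c)]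
    rw [h0]
    have hexp : ∀ c' : Fin N → Bool,
        (∏ i : Fin N, ((if c i then (1:ℝ) else -1) * geφ p01 p10 (c' i)
            + (if c i then p01 / (p01 + p10) else p10 / (p01 + p10))))
        = ∑ t : Finset (Fin N),
            ((∏ i ∈ t, (if c i then (1:ℝ) else -1)) * ∏ i ∈ t, geφ p01 p10 (c' i))
            * ∏ i ∈ tᶜ, (if c i then p01 / (p01 + p10) else p10 / (p01 + p10)) := by
      intro c'
      rw [Fintype.prod_add]
      refine Finset.sum_congr rfl fun t _ => ?_
      rw [Finset.prod_mul_distrib]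
    simp_rw [hexp, Finset.mul_sum]
    rw [Finset.sum_comm]
    rw [Finset.sum_eq_single (∅ : Finset (Fin N))]
    · simp [hmass, ← Finset.sum_mul, Finset.compl_empty]
    · intro t _ ht
      have : ∑ c' : Fin N → Bool, ν c'
          * (((∏ i ∈ t, (if c i then (1:ℝ) else -1)) * ∏ i ∈ t, geφ p01 p10 (c' i))
            * ∏ i ∈ tᶜ, (if c i then p01 / (p01 + p10) else p10 / (p01 + p10)))
          = ((∏ i ∈ t, (if c i then (1:ℝ) else -1))
              * ∏ i ∈ tᶜ, (if c i then p01 / (p01 + p10) else p10 / (p01 + p10)))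
            * ∑ c' : Fin N → Bool, ν c' * ∏ i ∈ t, geφ p01 p10 (c' i) := by
        rw [Finset.mul_sum]
        refine Finset.sum_congr rfl fun c' _ => by ring
      rw [this, hT t ht, mul_zero]
    · intro h
      exact absurd (Finset.mem_univ _) h
  refine ⟨hfin, ?_⟩
  rw [show (∑ m : Fin N, ∑ a : Fin N, x ((m, fun _ => false), a))
      = ν (fun _ => false) from rfl, hfin (fun _ => false)]
  simp [add_comm p01 p10]
  rw [div_pow]
end
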